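/- arXiv:2307.14820 — 5 statements merged into one kernel-verified Lean document; each statement's English description precedes it below -/
import Mathlib

section
/- Let G be a finite non-solvable group. Then G has property SN if and only if G has a unique minimal normal subgroup S such that S is non-abelian and G/S is a Dedekind group. Moreover, in that case S equals the socle of G and is a direct product of isomorphic finite simple groups, and if S is simple then the conjugation action of G on S is faithful (so G is almost simple). -/
set_option maxHeartbeats 1000000

/-- Property SN: for every normal subgroup `N` and every subgroup `Y` of `G`, either
`N ≤ Y` or the product `NY` (which equals `N ⊔ Y` since `N` is normal) is normal in `G`. -/
def HasSN (G : Type*) [Group G] : Prop :=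
  ∀ N : Subgroup G, N.Normal → ∀ Y : Subgroup G, N ≤ Y ∨ (N ⊔ Y).Normal

/-- Property SSN: every subgroup of `G` has SN. -/
def HasSSN (G : Type*) [Group G] : Prop :=
  ∀ H : Subgroup G, HasSN H

/-- A Dedekind group: every subgroup is normal. -/
def IsDedekind (G : Type*) [Group G] : Prop :=
  ∀ H : Subgroup G, H.Normal

/-- A minimal normal subgroup: a non-trivial normal subgroup containing no non-trivial
normal subgroup of `G` properly inside it. -/
def IsMinNormal {G : Type*} [Group G] (N : Subgroup G) : Prop :=
  N.Normal ∧ N ≠ ⊥ ∧ ∀ M : Subgroup G, M.Normal → M ≤ N → M ≠ ⊥ → M = N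

/-- The socle of `G`: the subgroup generated by all minimal normal subgroups. -/
def socle (G : Type*) [Group G] : Subgroup G :=
  sSup {N : Subgroup G | IsMinNormal N}

open Subgroup
open scoped commutatorElement

section Helpers

variable {G : Type*} [Group G]

/-- Conjugation as a monoid hom. -/
private def cg (g : G) : G →* G := (MulAut.conj g : G ≃* G)

private lemma cg_apply (g x : G) : cg g x = g * x * g⁻¹ := rfl

private lemma cg_comp (g h : G) : (cg g).comp (cg h) = cg (g * h) := by
  ext x
  simp only [MonoidHom.comp_apply, cg_apply]
  group

private lemma cg_one : (cg (1 : G)) = MonoidHom.id G := by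
  ext x; simp [cg_apply]

private lemma map_cg_cg (g : G) (K : Subgroup G) : (K.map (cg g)).map (cg g⁻¹) = K := by
  rw [Subgroup.map_map, cg_comp, inv_mul_cancel, cg_one, Subgroup.map_id]

private lemma map_cg_bot_iff (g : G) (K : Subgroup G) : K.map (cg g) = ⊥ ↔ K = ⊥ := by
  constructor
  · intro h
    have := congrArg (Subgroup.map (cg g⁻¹)) h
    rwa [map_cg_cg, Subgroup.map_bot] at this
  · rintro rfl; exact Subgroup.map_bot _

/-- Product decomposition in a sup when the second factor is normalized by the first. -/
private lemma mem_sup_of_normalized {Y A : Subgroup G}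
    (h : ∀ y ∈ Y, ∀ a ∈ A, y * a * y⁻¹ ∈ A) {x : G} (hx : x ∈ Y ⊔ A) :
    ∃ y ∈ Y, ∃ a ∈ A, x = y * a := by
  let P : Subgroup G :=
    { carrier := {x | ∃ y ∈ Y, ∃ a ∈ A, x = y * a}
      one_mem' := ⟨1, one_mem _, 1, one_mem _, by simp⟩
      mul_mem' := by
        rintro p q ⟨y, hy, a, ha, rfl⟩ ⟨y', hy', a', ha', rfl⟩
        refine ⟨y * y', mul_mem hy hy', (y'⁻¹ * a * y'⁻¹⁻¹) * a',
          mul_mem (h y'⁻¹ (inv_mem hy') a ha) ha', by group⟩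
      inv_mem' := by
        rintro p ⟨y, hy, a, ha, rfl⟩
        exact ⟨y⁻¹, inv_mem hy, y * a⁻¹ * y⁻¹, by simpa using h y hy a⁻¹ (inv_mem ha), by group⟩ }
  have h1 : Y ≤ P := fun y hy => ⟨y, hy, 1, one_mem _, by simp⟩
  have h2 : A ≤ P := fun a ha => ⟨1, one_mem _, a, ha, by simp⟩
  exact sup_le h1 h2 hx

/-- A join of normal subgroups is normal. -/
private lemma normal_iSup {ι : Sort*} {K : ι → Subgroup G} (h : ∀ i, (K i).Normal) :
    (⨆ i, K i).Normal := by
  refine ⟨fun n hn g => ?_⟩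
  have hle : (⨆ i, K i) ≤ Subgroup.comap (cg g) (⨆ i, K i) :=
    iSup_le fun i x hx => Subgroup.mem_comap.2 (le_iSup K i ((h i).conj_mem x hx g))
  have := hle hn
  rw [Subgroup.mem_comap, cg_apply] at this
  exact this

private lemma normal_inf {A B : Subgroup G} (hA : A.Normal) (hB : B.Normal) :
    (A ⊓ B).Normal :=
  ⟨fun n hn g => Subgroup.mem_inf.2
    ⟨hA.conj_mem _ (Subgroup.mem_inf.1 hn).1 g, hB.conj_mem _ (Subgroup.mem_inf.1 hn).2 g⟩⟩

private lemma centralizer_normal {S : Subgroup G} (hS : S.Normal) :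
    (Subgroup.centralizer (S : Set G)).Normal := by
  refine ⟨fun c hc g => ?_⟩
  rw [Subgroup.mem_centralizer_iff] at hc ⊢
  intro x hx
  have hx' : g⁻¹ * x * g ∈ S := by
    have := hS.conj_mem _ hx g⁻¹
    simpa using this
  have hcx := hc _ hx'
  calc x * (g * c * g⁻¹) = g * ((g⁻¹ * x * g) * c) * g⁻¹ := by group
    _ = g * (c * (g⁻¹ * x * g)) * g⁻¹ := by rw [hcx]
    _ = (g * c * g⁻¹) * x := by group

private lemma subgroup_card_lt [Finite G] {M N : Subgroup G} (h : M < N) :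
    Nat.card M < Nat.card N := by
  have hss : (M : Set G) ⊂ (N : Set G) := by
    rw [Set.ssubset_iff_subset_ne]
    exact ⟨h.le, fun he => h.ne (SetLike.coe_injective he)⟩
  have := Set.ncard_lt_ncard hss (N : Set G).toFinite
  rw [← Nat.card_coe_set_eq, ← Nat.card_coe_set_eq] at this
  exact this

/-- In a finite group, below any subgroup satisfying a property there is a minimal one. -/
private lemma exists_minimal_subgroup [Finite G] (P : Subgroup G → Prop) :
    ∀ (n : ℕ) (N : Subgroup G), Nat.card N ≤ n → P N →
      ∃ T : Subgroup G, P T ∧ T ≤ N ∧ ∀ W, P W → W ≤ T → W = T := by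
  intro n
  induction n with
  | zero => intro N hc _; have := Nat.card_pos (α := N); omega
  | succ n ih =>
    intro N hc hN
    by_cases h : ∀ W, P W → W ≤ N → W = N
    · exact ⟨N, hN, le_rfl, h⟩
    · push_neg at h
      obtain ⟨W, hW, hWle, hWne⟩ := h
      have hlt : Nat.card W < Nat.card N := subgroup_card_lt (lt_of_le_of_ne hWle hWne)
      obtain ⟨T, hT, hTle, hTmin⟩ := ih W (by omega) hW
      exact ⟨T, hT, hTle.trans hWle, hTmin⟩

private lemma exists_minNormal_le [Finite G] {N : Subgroup G} (hN : N.Normal) (hbot : N ≠ ⊥) :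
    ∃ S : Subgroup G, IsMinNormal S ∧ S ≤ N := by
  obtain ⟨T, ⟨hTn, hTb⟩, hTle, hTmin⟩ :=
    exists_minimal_subgroup (fun K => K.Normal ∧ K ≠ ⊥) (Nat.card N) N le_rfl ⟨hN, hbot⟩
  exact ⟨T, ⟨hTn, hTb, fun M hMn hMle hMb => hTmin M ⟨hMn, hMb⟩ hMle⟩, hTle⟩

private lemma ne_bot_exists {S : Subgroup G} (h : S ≠ ⊥) : ∃ x ∈ S, x ≠ (1 : G) := by
  by_contra hx
  push_neg at hx
  exact h (eq_bot_iff.2 fun x hxS => by simpa using hx x hxS)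

end Helpers

section SNLemmas

variable {G : Type*} [Group G]

/-- If `A, B` are normal with trivial intersection and `A ≠ ⊥`, then under SN every subgroup
of `B` is normal in `G`. -/
private lemma HasSN.normal_of_le_disjoint (hsn : HasSN G) {A B Y : Subgroup G}
    (hA : A.Normal) (hB : B.Normal) (hAbot : A ≠ ⊥) (hAB : A ⊓ B = ⊥)
    (hY : Y ≤ B) : Y.Normal := by
  have hAY : ¬ A ≤ Y := by
    intro hle
    apply hAbot
    have : A ≤ A ⊓ B := le_inf le_rfl (hle.trans hY)
    rw [hAB] at this
    exact le_bot_iff.mp this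
  rcases hsn A hA Y with h | h
  · exact absurd h hAY
  · have key : Y = (A ⊔ Y) ⊓ B := by
      apply le_antisymm (le_inf le_sup_right hY)
      intro x hx
      obtain ⟨hx1, hx2⟩ := Subgroup.mem_inf.mp hx
      rw [sup_comm] at hx1
      obtain ⟨y, hy, a, ha, rfl⟩ := mem_sup_of_normalized
        (fun y _ a ha => hA.conj_mem _ ha y) hx1
      have haB : a ∈ B := by
        have : a = y⁻¹ * (y * a) := by group
        rw [this]
        exact mul_mem (inv_mem (hY hy)) hx2
      have : a ∈ A ⊓ B := Subgroup.mem_inf.2 ⟨ha, haB⟩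
      rw [hAB, Subgroup.mem_bot] at this
      subst this
      simpa using hy
    rw [key]
    exact normal_inf h hB

/-- If `S` is normal and nonabelian then under SN every subgroup containing `S` is normal. -/
private lemma HasSN.normal_of_nonabelian_le (hsn : HasSN G) {S : Subgroup G} (hS : S.Normal)
    (hna : ¬ ∀ x ∈ S, ∀ y ∈ S, x * y = y * x) {H : Subgroup G} (hSH : S ≤ H) :
    H.Normal := by
  have key : ∀ h : G, (S ⊔ Subgroup.zpowers h).Normal := by
    intro h
    rcases hsn S hS (Subgroup.zpowers h) with hle | hn
    · exfalso
      apply hna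
      intro x hx y hy
      obtain ⟨m, hm⟩ := Subgroup.mem_zpowers_iff.mp (hle hx)
      obtain ⟨k, hk⟩ := Subgroup.mem_zpowers_iff.mp (hle hy)
      rw [← hm, ← hk, ← zpow_add, ← zpow_add, add_comm]
    · exact hn
  have hH : H = ⨆ h : H, (S ⊔ Subgroup.zpowers (h : G)) := by
    apply le_antisymm
    · intro x hx
      exact le_iSup (fun h : H => S ⊔ Subgroup.zpowers (h : G)) ⟨x, hx⟩
        (Subgroup.mem_sup_right (Subgroup.mem_zpowers x))
    · exact iSup_le fun h => sup_le hSH ((Subgroup.zpowers_le).mpr h.2)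
  rw [hH]
  exact normal_iSup fun h => key h

/-- Uniqueness of the minimal normal subgroup under SN, given a nonabelian one. -/
private lemma HasSN.minNormal_unique (hsn : HasSN G) {S T : Subgroup G}
    (hS : IsMinNormal S) (hna : ¬ ∀ x ∈ S, ∀ y ∈ S, x * y = y * x)
    (hT : IsMinNormal T) : T = S := by
  by_contra hne
  have hdisj : T ⊓ S = ⊥ := by
    by_contra hb
    have h1 := hS.2.2 (T ⊓ S) (normal_inf hT.1 hS.1) inf_le_right hb
    have h2 := hT.2.2 (T ⊓ S) (normal_inf hT.1 hS.1) inf_le_left hb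
    exact hne (h2.symm.trans h1)
  obtain ⟨x, hxS, hx1⟩ := ne_bot_exists hS.2.1
  have hzn : (Subgroup.zpowers x).Normal :=
    hsn.normal_of_le_disjoint hT.1 hS.1 hT.2.1 hdisj ((Subgroup.zpowers_le).mpr hxS)
  have hzb : Subgroup.zpowers x ≠ ⊥ := by
    intro h
    apply hx1
    have := Subgroup.mem_zpowers x
    rw [h, Subgroup.mem_bot] at this
    exact this
  have hzS := hS.2.2 _ hzn ((Subgroup.zpowers_le).mpr hxS) hzb
  apply hna
  intro a ha b hb
  rw [← hzS] at ha hb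
  obtain ⟨m, hm⟩ := Subgroup.mem_zpowers_iff.mp ha
  obtain ⟨k, hk⟩ := Subgroup.mem_zpowers_iff.mp hb
  rw [← hm, ← hk, ← zpow_add, ← zpow_add, add_comm]

/-- SN passes to quotients. -/
private lemma HasSN.quotient (hsn : HasSN G) (S : Subgroup G) [S.Normal] :
    HasSN (G ⧸ S) := by
  intro N hN Y
  have hsurj := QuotientGroup.mk'_surjective S
  rcases hsn (N.comap (QuotientGroup.mk' S)) (hN.comap _) (Y.comap (QuotientGroup.mk' S))
    with h | h
  · left
    intro x hx
    obtain ⟨g, rfl⟩ := hsurj x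
    exact Subgroup.mem_comap.mp (h (Subgroup.mem_comap.mpr hx))
  · right
    have heq : ((N.comap (QuotientGroup.mk' S) ⊔ Y.comap (QuotientGroup.mk' S)).map
        (QuotientGroup.mk' S)) = N ⊔ Y := by
      rw [Subgroup.map_sup, Subgroup.map_comap_eq_self_of_surjective hsurj,
        Subgroup.map_comap_eq_self_of_surjective hsurj]
    rw [← heq]
    exact h.map _ hsurj

end SNLemmas


section Decomposition

variable {G : Type*} [Group G]

/-- `K` is a subgroup of `S` normalized by `S`. -/
private def NormalIn (K S : Subgroup G) : Prop :=
  K ≤ S ∧ ∀ s ∈ S, ∀ k ∈ K, s * k * s⁻¹ ∈ K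

private lemma normalIn_inf {A B S : Subgroup G} (hA : NormalIn A S) (hB : NormalIn B S) :
    NormalIn (A ⊓ B) S :=
  ⟨inf_le_left.trans hA.1, fun s hs k hk =>
    Subgroup.mem_inf.2 ⟨hA.2 s hs k (Subgroup.mem_inf.1 hk).1,
      hB.2 s hs k (Subgroup.mem_inf.1 hk).2⟩⟩

private lemma normalIn_conj {S K : Subgroup G} (hS : S.Normal) (h : NormalIn K S) (g : G) :
    NormalIn (K.map (cg g)) S := by
  constructor
  · rintro x hx
    obtain ⟨k, hk, rfl⟩ := Subgroup.mem_map.mp hx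
    exact hS.conj_mem k (h.1 hk) g
  · intro s hs x hx
    obtain ⟨k, hk, rfl⟩ := Subgroup.mem_map.mp hx
    refine Subgroup.mem_map.mpr ⟨(g⁻¹ * s * g) * k * (g⁻¹ * s * g)⁻¹, ?_, ?_⟩
    · refine h.2 (g⁻¹ * s * g) ?_ k hk
      have := hS.conj_mem s hs g⁻¹
      simpa using this
    · rw [cg_apply, cg_apply]
      group

private lemma minNormalIn_conj {S T₁ : Subgroup G} (hS : S.Normal)
    (hmin : ∀ W, NormalIn W S → W ≠ ⊥ → W ≤ T₁ → W = T₁) (g : G) :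
    ∀ W, NormalIn W S → W ≠ ⊥ → W ≤ T₁.map (cg g) → W = T₁.map (cg g) := by
  intro W hW hWb hWle
  have h1 : W.map (cg g⁻¹) ≤ T₁ := by
    have := Subgroup.map_mono (f := cg g⁻¹) hWle
    rwa [map_cg_cg] at this
  have h2 := hmin _ (normalIn_conj hS hW g⁻¹) (by rwa [Ne, map_cg_bot_iff]) h1
  have h3 := congrArg (Subgroup.map (cg g⁻¹⁻¹)) h2
  rw [map_cg_cg] at h3
  rw [inv_inv] at h3
  exact h3

/-- A minimal normal subgroup of a finite group is a direct product of isomorphic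
finite simple groups. -/
private lemma minNormal_decomposition {G : Type} [Group G] [Finite G] {S : Subgroup G}
    (hS : IsMinNormal S) :
    ∃ (ι : Type) (T : Type) (_ : Group T), Finite ι ∧ Nonempty ι ∧ Finite T ∧
      IsSimpleGroup T ∧ Nonempty (S ≃* (ι → T)) := by
  classical
  haveI : Finite (Subgroup G) :=
    Finite.of_injective (fun H : Subgroup G => (H : Set G)) SetLike.coe_injective
  have hSnorm : S.Normal := hS.1
  -- T₁ : a minimal subgroup of S which is normalized by S
  obtain ⟨T₁, ⟨hT₁nin, hT₁b⟩, hT₁leS, hT₁min'⟩ :=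
    exists_minimal_subgroup (fun K => NormalIn K S ∧ K ≠ ⊥) (Nat.card S) S le_rfl
      ⟨⟨le_rfl, fun s hs k hk => mul_mem (mul_mem hs hk) (inv_mem hs)⟩, hS.2.1⟩
  have hT₁min : ∀ W, NormalIn W S → W ≠ ⊥ → W ≤ T₁ → W = T₁ :=
    fun W h1 h2 h3 => hT₁min' W ⟨h1, h2⟩ h3
  -- the set of conjugates of T₁
  set 𝒞 : Set (Subgroup G) := Set.range (fun g : G => T₁.map (cg g)) with h𝒞_def
  have hT₁mem𝒞 : T₁ ∈ 𝒞 := ⟨1, by show T₁.map (cg 1) = T₁; rw [cg_one, Subgroup.map_id]⟩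
  -- joins of finsets of subgroups normalized by S are normalized by S
  have hNinSup : ∀ F : Finset (Subgroup G), (∀ A ∈ F, NormalIn A S) →
      NormalIn (F.sup id) S := by
    intro F h
    constructor
    · exact Finset.sup_le fun A hA => (h A hA).1
    · intro s hs k hk
      have hle : F.sup id ≤ Subgroup.comap (cg s) (F.sup id) := by
        refine Finset.sup_le fun A hA x hx => Subgroup.mem_comap.2 ?_
        exact (Finset.le_sup (f := id) hA) ((h A hA).2 s hs x hx)
      exact (Subgroup.mem_comap.1 (hle hk))
  -- extending a "good" family
  have hinsert : ∀ F : Finset (Subgroup G), (∀ A ∈ F, NormalIn A S) →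
      (∀ A ∈ F, A ⊓ (F.erase A).sup id = ⊥) →
      ∀ B, NormalIn B S → B ≠ ⊥ → B ⊓ F.sup id = ⊥ →
        (∀ A ∈ insert B F, A ⊓ ((insert B F).erase A).sup id = ⊥) ∧ B ∉ F := by
    intro F hF hgood B hB hBb hBd
    have hBnotF : B ∉ F := by
      intro hBF
      have h1 : B ≤ F.sup id := Finset.le_sup (f := id) hBF
      have h2 : B ⊓ F.sup id = B := inf_eq_left.mpr h1
      rw [hBd] at h2
      exact hBb h2.symm
    refine ⟨?_, hBnotF⟩
    intro A hA
    rcases Finset.mem_insert.mp hA with rfl | hAF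
    · rwa [Finset.erase_insert hBnotF]
    · have hAB : A ≠ B := fun h => hBnotF (h ▸ hAF)
      rw [Finset.erase_insert_of_ne (fun h => hAB h.symm), Finset.sup_insert]
      rw [eq_bot_iff]
      intro x hx
      obtain ⟨hxA, hxBD⟩ := Subgroup.mem_inf.mp hx
      have hDnin : NormalIn ((F.erase A).sup id) S :=
        hNinSup _ (fun A' hA' => hF A' (Finset.mem_of_mem_erase hA'))
      obtain ⟨b, hb, d, hd, rfl⟩ := mem_sup_of_normalized
        (fun y hy a ha => hDnin.2 y (hB.1 hy) a ha) hxBD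
      have hdF : d ∈ F.sup id :=
        (Finset.sup_mono (Finset.erase_subset A F) :
          (F.erase A).sup id ≤ F.sup id) hd
      have hbF : b ∈ F.sup id := by
        have h1 : b = (b * d) * d⁻¹ := by group
        rw [h1]
        exact mul_mem (Finset.le_sup (f := id) hAF hxA) (inv_mem hdF)
      have hbbot : b ∈ B ⊓ F.sup id := Subgroup.mem_inf.2 ⟨hb, hbF⟩
      rw [hBd, Subgroup.mem_bot] at hbbot
      have hd' : d ∈ A ⊓ (F.erase A).sup id :=
        Subgroup.mem_inf.2 ⟨by rwa [hbbot, one_mul] at hxA, hd⟩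
      rw [hgood A hAF, Subgroup.mem_bot] at hd'
      rw [Subgroup.mem_bot, hbbot, hd', one_mul]
  -- a maximal good family containing T₁
  set 𝒮 : Set (Finset (Subgroup G)) :=
    {F | (∀ A ∈ F, A ∈ 𝒞) ∧ (∀ A ∈ F, A ⊓ (F.erase A).sup id = ⊥) ∧ T₁ ∈ F} with h𝒮_def
  have hsing : ({T₁} : Finset (Subgroup G)) ∈ 𝒮 := by
    refine ⟨fun A hA => ?_, fun A hA => ?_, Finset.mem_singleton_self T₁⟩
    · rw [Finset.mem_singleton] at hA; rw [hA]; exact hT₁mem𝒞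
    · rw [Finset.mem_singleton] at hA
      subst hA
      rw [Finset.erase_singleton, Finset.sup_empty]
      exact inf_bot_eq A
  haveI : Fintype (Subgroup G) := Fintype.ofFinite _
  obtain ⟨F, hF𝒮, hFmax⟩ :=
    Set.Finite.exists_maximalFor Finset.card 𝒮 (Set.toFinite _) ⟨_, hsing⟩
  obtain ⟨hF𝒞, hFgood, hT₁F⟩ := hF𝒮
  have hFnin : ∀ A ∈ F, NormalIn A S := by
    intro A hA
    obtain ⟨g, hg⟩ := hF𝒞 A hA
    rw [← hg]
    exact normalIn_conj hSnorm hT₁nin g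
  -- all conjugates of T₁ lie below the join of the family
  have hconjle : ∀ g : G, T₁.map (cg g) ≤ F.sup id := by
    intro g
    by_contra hnle
    have hBnin : NormalIn (T₁.map (cg g)) S := normalIn_conj hSnorm hT₁nin g
    have hBb : T₁.map (cg g) ≠ ⊥ := by rw [Ne, map_cg_bot_iff]; exact hT₁b
    have hdis : T₁.map (cg g) ⊓ F.sup id = ⊥ := by
      by_cases h0 : T₁.map (cg g) ⊓ F.sup id = ⊥
      · exact h0
      · exfalso
        have heq := minNormalIn_conj hSnorm hT₁min g _
          (normalIn_inf hBnin (hNinSup F hFnin)) h0 inf_le_left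
        exact hnle ((le_of_eq heq.symm).trans inf_le_right)
    obtain ⟨hgood', hBnotF⟩ := hinsert F hFnin hFgood _ hBnin hBb hdis
    have hmem𝒮 : insert (T₁.map (cg g)) F ∈ 𝒮 := by
      refine ⟨fun A hA => ?_, hgood', Finset.mem_insert_of_mem hT₁F⟩
      rcases Finset.mem_insert.mp hA with rfl | h
      · exact ⟨g, rfl⟩
      · exact hF𝒞 A h
    have hcard := hFmax hmem𝒮
      (by rw [Finset.card_insert_of_notMem hBnotF]; omega)
    rw [Finset.card_insert_of_notMem hBnotF] at hcard
    omega
  -- the join is all of S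
  have hT₁leJ : T₁ ≤ F.sup id := Finset.le_sup (f := id) hT₁F
  have hJnorm : (F.sup id).Normal := by
    refine ⟨fun x hx g => ?_⟩
    have hle : F.sup id ≤ Subgroup.comap (cg g) (F.sup id) := by
      refine Finset.sup_le fun A hA => ?_
      obtain ⟨h, hh⟩ := hF𝒞 A hA
      intro y hy
      refine Subgroup.mem_comap.2 ?_
      have hmaple : (T₁.map (cg h)).map (cg g) ≤ F.sup id := by
        rw [Subgroup.map_map, cg_comp]
        exact hconjle (g * h)
      rw [← hh] at hy
      exact hmaple (Subgroup.mem_map_of_mem _ hy)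
    exact Subgroup.mem_comap.1 (hle hx)
  have hJS : F.sup id = S := by
    refine hS.2.2 _ hJnorm (hNinSup F hFnin).1 ?_
    intro h
    exact hT₁b (le_bot_iff.mp (h ▸ hT₁leJ))
  -- distinct members intersect trivially and commute elementwise
  have hpairdis : ∀ A ∈ F, ∀ B ∈ F, A ≠ B → A ⊓ B = ⊥ := by
    intro A hA B hB hne
    have hBle : B ≤ (F.erase A).sup id :=
      Finset.le_sup (f := id) (Finset.mem_erase.2 ⟨fun h => hne h.symm, hB⟩)
    exact le_bot_iff.mp ((inf_le_inf_left A hBle).trans (le_of_eq (hFgood A hA)))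
  have hcomm : ∀ A ∈ F, ∀ B ∈ F, A ≠ B → ∀ x ∈ A, ∀ y ∈ B, Commute x y := by
    intro A hA B hB hne x hx y hy
    rw [← commutatorElement_eq_one_iff_commute]
    have hxS : x ∈ S := (hFnin A hA).1 hx
    have hyS : y ∈ S := (hFnin B hB).1 hy
    have h1 : ⁅x, y⁆ ∈ A := by
      have h2 : y * x⁻¹ * y⁻¹ ∈ A := (hFnin A hA).2 y hyS x⁻¹ (inv_mem hx)
      have h3 := mul_mem hx h2
      have h4 : x * (y * x⁻¹ * y⁻¹) = ⁅x, y⁆ := by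
        rw [commutatorElement_def]; group
      rwa [h4] at h3
    have h2 : ⁅x, y⁆ ∈ B := by
      have h2 : x * y * x⁻¹ ∈ B := (hFnin B hB).2 x hxS y hy
      have h3 := mul_mem h2 (inv_mem hy)
      rwa [commutatorElement_def]
    have h5 : ⁅x, y⁆ ∈ A ⊓ B := Subgroup.mem_inf.2 ⟨h1, h2⟩
    rw [hpairdis A hA B hB hne, Subgroup.mem_bot] at h5
    exact h5
  -- T₁ is simple
  haveI : Nontrivial T₁ := (Subgroup.nontrivial_iff_ne_bot T₁).mpr hT₁b
  have hsimple : IsSimpleGroup T₁ := by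
    constructor
    intro W' hW'
    by_cases hWb : W'.map T₁.subtype = ⊥
    · left
      apply Subgroup.map_injective (Subgroup.subtype_injective T₁)
      rw [hWb, Subgroup.map_bot]
    · right
      have hWle : W'.map T₁.subtype ≤ T₁ := Subgroup.map_subtype_le W'
      have hWnin : NormalIn (W'.map T₁.subtype) S := by
        refine ⟨hWle.trans hT₁leS, ?_⟩
        have hnorm : ∀ A ∈ F, A ≤ Subgroup.normalizer ((W'.map T₁.subtype : Subgroup G) : Set G) := by
          intro A hA
          by_cases hAT : A = T₁
          · subst hAT
            intro t ht
            rw [Subgroup.mem_normalizer_iff]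
            intro h
            constructor
            · intro hhW
              obtain ⟨w', hw', rfl⟩ := Subgroup.mem_map.mp hhW
              exact Subgroup.mem_map.mpr ⟨⟨t, ht⟩ * w' * ⟨t, ht⟩⁻¹,
                hW'.conj_mem w' hw' ⟨t, ht⟩, rfl⟩
            · intro hhW
              obtain ⟨w', hw', heq⟩ := Subgroup.mem_map.mp hhW
              refine Subgroup.mem_map.mpr ⟨⟨t, ht⟩⁻¹ * w' * ⟨t, ht⟩⁻¹⁻¹,
                hW'.conj_mem w' hw' ⟨t, ht⟩⁻¹, ?_⟩
              show t⁻¹ * (w' : G) * t⁻¹⁻¹ = h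
              rw [show ((w' : G)) = t * h * t⁻¹ from heq]
              group
          · intro a ha
            have hconj : ∀ u ∈ T₁, ∀ b ∈ A, b * u * b⁻¹ = u := by
              intro u hu b hb
              have hcongr := (hcomm A hA T₁ hT₁F hAT b hb u hu).eq
              rw [hcongr]; group
            rw [Subgroup.mem_normalizer_iff]
            intro h
            constructor
            · intro hh
              rw [hconj h (hWle hh) a ha]
              exact hh
            · intro hh
              have h1 : a⁻¹ * (a * h * a⁻¹) * a⁻¹⁻¹ = a * h * a⁻¹ :=
                hconj _ (hWle hh) a⁻¹ (inv_mem ha)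
              have h2 : a⁻¹ * (a * h * a⁻¹) * a⁻¹⁻¹ = h := by group
              rw [h2] at h1
              rwa [h1]
        have hSle : S ≤ Subgroup.normalizer ((W'.map T₁.subtype : Subgroup G) : Set G) := by
          rw [← hJS]
          exact Finset.sup_le hnorm
        intro s hs w hw
        exact ((Subgroup.mem_normalizer_iff.mp (hSle hs)) w).mp hw
      have hWT := hT₁min _ hWnin hWb hWle
      apply Subgroup.map_injective (Subgroup.subtype_injective T₁)
      rw [hWT, ← MonoidHom.range_eq_map, Subgroup.range_subtype]
  -- assemble the isomorphism
  have hKcomm : Pairwise fun i j : {A : Subgroup G // A ∈ F} =>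
      ∀ x y : G, x ∈ (i : Subgroup G) → y ∈ (j : Subgroup G) → Commute x y := by
    intro i j hij x y hx hy
    exact hcomm i.1 i.2 j.1 j.2 (fun h => hij (Subtype.ext h)) x hx y hy
  haveI : Fintype {A : Subgroup G // A ∈ F} := Fintype.ofFinite _
  have hindep : iSupIndep (fun i : {A : Subgroup G // A ∈ F} => (i : Subgroup G)) := by
    intro i
    have hle : (⨆ (j : {A : Subgroup G // A ∈ F}) (_ : j ≠ i), (j : Subgroup G)) ≤
        (F.erase i.1).sup id := by
      refine iSup_le fun j => iSup_le fun hji => ?_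
      exact Finset.le_sup (f := id)
        (Finset.mem_erase.2 ⟨fun h => hji (Subtype.ext h), j.2⟩)
    exact Disjoint.mono_right hle (disjoint_iff.mpr (hFgood i.1 i.2))
  have hrange : (Subgroup.noncommPiCoprod hKcomm).range = S := by
    rw [Subgroup.noncommPiCoprod_range]
    rw [← hJS]
    apply le_antisymm
    · exact iSup_le fun i => Finset.le_sup (f := id) i.2
    · exact Finset.sup_le fun A hA =>
        le_iSup (fun i : {A : Subgroup G // A ∈ F} => (i : Subgroup G)) ⟨A, hA⟩
  have hinj := Subgroup.injective_noncommPiCoprod_of_iSupIndep hindep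
    (hcomm := hKcomm)
  have hKiso : ∀ i : {A : Subgroup G // A ∈ F}, Nonempty ((i : Subgroup G) ≃* T₁) := by
    intro i
    obtain ⟨g, hg⟩ := hF𝒞 i.1 i.2
    exact ⟨(MulEquiv.subgroupCongr hg.symm).trans
      ((MulEquiv.subgroupMap (MulAut.conj g) T₁).symm)⟩
  refine ⟨{A : Subgroup G // A ∈ F}, T₁, inferInstance, inferInstance, ⟨⟨T₁, hT₁F⟩⟩,
    inferInstance, hsimple, ⟨?_⟩⟩
  exact (((MonoidHom.ofInjective hinj).trans (MulEquiv.subgroupCongr hrange)).symm).trans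
    (MulEquiv.piCongrRight (fun i => Classical.choice (hKiso i)))

end Decomposition


section MainInduction

universe u

/-- Key existence result: a finite non-solvable SN group has a nonabelian minimal normal
subgroup. Proved by strong induction on the cardinality. -/
private lemma exists_minNormal_nonabelian :
    ∀ n : ℕ, ∀ (G : Type u) (_ : Group G) (_ : Finite G), Nat.card G ≤ n → HasSN G →
      ¬ IsSolvable G →
      ∃ S : Subgroup G, IsMinNormal S ∧ ¬ ∀ x ∈ S, ∀ y ∈ S, x * y = y * x := by
  intro n
  induction n with
  | zero =>
    intro G _ _ hc _ _
    have := Nat.card_pos (α := G)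
    omega
  | succ n ih =>
    intro G _ _ hc hsn hns
    -- G is nontrivial
    have hnt : Nontrivial G := by
      rcases subsingleton_or_nontrivial G with h | h
      · exact absurd (isSolvable_of_comm fun a b => Subsingleton.elim _ _) hns
      · exact h
    have htopbot : (⊤ : Subgroup G) ≠ ⊥ := by
      intro h
      obtain ⟨x, hx⟩ := exists_ne (1 : G)
      have : x ∈ (⊥ : Subgroup G) := h ▸ Subgroup.mem_top x
      exact hx (Subgroup.mem_bot.mp this)
    obtain ⟨S, hSmin, -⟩ := exists_minNormal_le (G := G) inferInstance htopbot
    by_cases habel : ∀ x ∈ S, ∀ y ∈ S, x * y = y * x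
    swap
    · exact ⟨S, hSmin, habel⟩
    exfalso
    -- the abelian case leads to a contradiction
    haveI hSnorm : S.Normal := hSmin.1
    have hSsolv : Group.IsSolvable S :=
      isSolvable_of_comm fun a b => Subtype.ext (habel a a.2 b b.2)
    have hqns : ¬ Group.IsSolvable (G ⧸ S) := by
      intro h
      exact hns (solvable_of_ker_le_range S.subtype (QuotientGroup.mk' S)
        (by rw [QuotientGroup.ker_mk', Subgroup.range_subtype]))
    have hcardS : 1 < Nat.card S := (Subgroup.one_lt_card_iff_ne_bot S).mpr hSmin.2.1
    have hcardq : Nat.card (G ⧸ S) ≤ n := by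
      have h1 := Subgroup.card_eq_card_quotient_mul_card_subgroup S
      have h2 := Nat.card_pos (α := G ⧸ S)
      nlinarith [hc, h1, h2, hcardS]
    obtain ⟨T, hTmin, hTna⟩ := ih (G ⧸ S) inferInstance inferInstance hcardq
      (hsn.quotient S) hqns
    -- S is an elementary abelian p-group
    set p := (Nat.card S).minFac with hp_def
    have hp : p.Prime := Nat.minFac_prime (by omega)
    haveI := Fact.mk hp
    obtain ⟨x, hx⟩ := exists_prime_orderOf_dvd_card' (G := S) p (Nat.minFac_dvd _)
    -- the p-torsion subgroup of S
    have hSp : ∀ g ∈ S, g ^ p = 1 := by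
      let Sp : Subgroup G :=
        { carrier := {g | g ∈ S ∧ g ^ p = 1}
          one_mem' := ⟨one_mem S, one_pow p⟩
          mul_mem' := by
            rintro a b ⟨haS, hap⟩ ⟨hbS, hbp⟩
            refine ⟨mul_mem haS hbS, ?_⟩
            have hcomm : Commute a b := habel a haS b hbS
            rw [hcomm.mul_pow, hap, hbp, one_mul]
          inv_mem' := by
            rintro a ⟨haS, hap⟩
            exact ⟨inv_mem haS, by rw [inv_pow, hap, inv_one]⟩ }
      have hSpnorm : Sp.Normal := by
        refine ⟨fun a ha g => ?_⟩
        refine ⟨hSnorm.conj_mem a ha.1 g, ?_⟩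
        have : (g * a * g⁻¹) ^ p = g * a ^ p * g⁻¹ := by
          have := map_pow (MulAut.conj g) a p
          simpa [MulAut.conj_apply] using this
        rw [this, ha.2, mul_one, mul_inv_cancel]
      have hSple : Sp ≤ S := fun g hg => hg.1
      have hSpbot : Sp ≠ ⊥ := by
        intro h
        have hxmem : (x : G) ∈ Sp := by
          refine ⟨x.2, ?_⟩
          have : x ^ p = 1 := by rw [← hx]; exact pow_orderOf_eq_one x
          have := congrArg (Subgroup.subtype S) this
          simpa using this
        rw [h, Subgroup.mem_bot] at hxmem
        have : x = 1 := Subtype.ext hxmem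
        rw [this, orderOf_one] at hx
        exact hp.one_lt.ne' hx.symm
      have := hSmin.2.2 Sp hSpnorm hSple hSpbot
      intro g hg
      have : g ∈ Sp := this ▸ hg
      exact this.2
    -- S is a p-group, so its cardinality is a power of p
    have hpgroup : IsPGroup p S := by
      intro g
      exact ⟨1, by
        have : (g : G) ^ p = 1 := hSp g g.2
        rw [pow_one]
        exact Subtype.ext (by simpa using this)⟩
    obtain ⟨k, hk⟩ := hpgroup.exists_card_eq
    -- now analyze T, the nonabelian minimal normal subgroup of G/S
    set Gq := G ⧸ S
    have hTnontriv : 1 < Nat.card T := (Subgroup.one_lt_card_iff_ne_bot T).mpr hTmin.2.1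
    set c := Nat.card T with hc_def
    by_cases hpp : ∃ (q : ℕ) (m : ℕ), q.Prime ∧ c = q ^ m
    · -- T is a q-group: its center is a proper nontrivial characteristic subgroup
      obtain ⟨q, m, hq, hcq⟩ := hpp
      haveI := Fact.mk hq
      have hTpgroup : IsPGroup q T := IsPGroup.of_card hcq
      haveI : Nontrivial T := (Subgroup.nontrivial_iff_ne_bot T).mpr hTmin.2.1
      haveI : Nontrivial (Subgroup.center T) := hTpgroup.center_nontrivial
      obtain ⟨z, hz⟩ := exists_ne (1 : Subgroup.center T)
      set Z : Subgroup Gq := Subgroup.centralizer (T : Set Gq) ⊓ T with hZ_def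
      have hZnorm : Z.Normal := normal_inf (centralizer_normal hTmin.1) hTmin.1
      have hZle : Z ≤ T := inf_le_right
      have hzval : ((z : T) : Gq) ∈ Z := by
        refine Subgroup.mem_inf.2 ⟨?_, (z : T).2⟩
        rw [Subgroup.mem_centralizer_iff]
        intro h hh
        have := (Subgroup.mem_center_iff.mp z.2) ⟨h, hh⟩
        have := congrArg (Subgroup.subtype T) this
        simpa using this
      have hZbot : Z ≠ ⊥ := by
        intro h
        rw [h, Subgroup.mem_bot] at hzval
        apply hz
        ext
        simpa using hzval
      have hZT := hTmin.2.2 Z hZnorm hZle hZbot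
      apply hTna
      intro a ha b hb
      have hbZ : b ∈ Z := hZT.symm ▸ hb
      have := (Subgroup.mem_inf.mp hbZ).1
      rw [Subgroup.mem_centralizer_iff] at this
      exact this a ha
    · -- T has at least two prime divisors; pick q ≠ p among them
      push_neg at hpp
      have hcne : c ≠ 0 := by omega
      have hcne1 : c ≠ 1 := by omega
      set q₁ := c.minFac with hq₁_def
      have hq₁ : q₁.Prime := Nat.minFac_prime hcne1
      have hq₁dvd : q₁ ∣ c := Nat.minFac_dvd c
      obtain ⟨r, hr, hrdvd, hrne⟩ : ∃ r, r.Prime ∧ r ∣ c ∧ r ≠ q₁ := by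
        by_contra hcon
        push_neg at hcon
        exact hpp q₁ _ hq₁
          (Nat.eq_prime_pow_of_unique_prime_dvd hcne fun {s} hs hsd => hcon s hs hsd)
      obtain ⟨q, hq, hqp, hqdvd, r', hr', hr'ne, hr'dvd⟩ :
          ∃ q, q.Prime ∧ q ≠ p ∧ q ∣ c ∧ ∃ r', r'.Prime ∧ r' ≠ q ∧ r' ∣ c := by
        by_cases h : q₁ = p
        · exact ⟨r, hr, h ▸ hrne, hrdvd, q₁, hq₁, fun he => hrne he.symm, hq₁dvd⟩
        · exact ⟨q₁, hq₁, h, hq₁dvd, r, hr, hrne, hrdvd⟩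
      haveI := Fact.mk hq
      -- Sylow q-subgroup of T
      obtain ⟨Q'⟩ : Nonempty (Sylow q T) := inferInstance
      set Qb : Subgroup Gq := (Q' : Subgroup T).map T.subtype with hQb_def
      have hQble : Qb ≤ T := Subgroup.map_subtype_le _
      have hcardQb : Nat.card Qb = q ^ c.factorization q := by
        have h1 : Nat.card Qb = Nat.card (Q' : Subgroup T) :=
          (Nat.card_congr (Subgroup.equivMapOfInjective _ _
            (Subgroup.subtype_injective T)).toEquiv).symm
        rw [h1, Sylow.card_eq_multiplicity]
      have hfac_pos : 0 < c.factorization q :=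
        Nat.Prime.factorization_pos_of_dvd hq hcne hqdvd
      have hQbbot : Qb ≠ ⊥ := by
        intro h
        rw [h, Subgroup.card_bot] at hcardQb
        have : 1 < q ^ c.factorization q := Nat.one_lt_pow (by omega) hq.one_lt
        omega
      have hQbne : Qb ≠ T := by
        intro h
        have hcc : c = q ^ c.factorization q := by
          rw [← hcardQb, h]
        have h2 : r' ∣ q ^ c.factorization q := by rw [← hcc]; exact hr'dvd
        exact hr'ne ((Nat.prime_dvd_prime_iff_eq hr' hq).mp (hr'.dvd_of_dvd_pow h2))
      -- pull back to G and apply Schur-Zassenhaus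
      set V : Subgroup G := Qb.comap (QuotientGroup.mk' S) with hV_def
      have hSV : S ≤ V := by
        intro s hs
        refine Subgroup.mem_comap.mpr ?_
        have : (QuotientGroup.mk' S) s = 1 := by
          rw [← MonoidHom.mem_ker, QuotientGroup.ker_mk']
          exact hs
        rw [this]
        exact Qb.one_mem
      set N : Subgroup V := S.subgroupOf V with hN_def
      haveI hNnorm : N.Normal := Subgroup.normal_subgroupOf
      have hcardN : Nat.card N = p ^ k := by
        rw [← hk]
        exact Nat.card_congr (Subgroup.subgroupOfEquivOfLe hSV).toEquiv
      set ψ : V →* Gq := (QuotientGroup.mk' S).comp V.subtype with hψ_def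
      have hkerψ : ψ.ker = N := by
        ext v
        rw [MonoidHom.mem_ker, hN_def, Subgroup.mem_subgroupOf]
        show (QuotientGroup.mk' S) (v : G) = 1 ↔ _
        rw [QuotientGroup.mk'_apply, QuotientGroup.eq_one_iff]
      have hrangeψ : ψ.range = Qb := by
        rw [hψ_def, MonoidHom.range_comp, Subgroup.range_subtype, hV_def,
          Subgroup.map_comap_eq, MonoidHom.range_eq_top.mpr (QuotientGroup.mk'_surjective S),
          top_inf_eq]
      have hindexN : N.index = q ^ c.factorization q := by
        rw [Subgroup.index_eq_card, ← hcardQb, ← hkerψ, ← hrangeψ]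
        exact Nat.card_congr (QuotientGroup.quotientKerEquivRange ψ).toEquiv
      have hcop : Nat.Coprime (Nat.card N) N.index := by
        rw [hcardN, hindexN]
        exact Nat.Coprime.pow _ _ ((Nat.coprime_primes hp hq).mpr (fun he => hqp he.symm))
      obtain ⟨Hc, hHc⟩ := Subgroup.exists_right_complement'_of_coprime hcop
      set Y : Subgroup G := Hc.map V.subtype with hY_def
      have hsup : S ⊔ Y = V := by
        have h1 : (N ⊔ Hc).map V.subtype = V := by
          rw [hHc.sup_eq_top, ← MonoidHom.range_eq_map, Subgroup.range_subtype]
        rw [Subgroup.map_sup] at h1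
        rw [hN_def, Subgroup.subgroupOf_map_subtype, inf_eq_left.mpr hSV] at h1
        exact h1
      have hnotle : ¬ S ≤ Y := by
        intro hle
        obtain ⟨s, hsS, hs1⟩ := ne_bot_exists hSmin.2.1
        obtain ⟨v, hvHc, hveq⟩ := Subgroup.mem_map.mp (hle hsS)
        have hvN : v ∈ N := by
          rw [hN_def, Subgroup.mem_subgroupOf]
          show (v : G) ∈ S
          rw [show ((v : G)) = s from hveq]
          exact hsS
        have : v ∈ N ⊓ Hc := Subgroup.mem_inf.2 ⟨hvN, hvHc⟩
        rw [disjoint_iff.mp hHc.disjoint, Subgroup.mem_bot] at this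
        rw [this] at hveq
        exact hs1 (by simpa using hveq.symm)
      rcases hsn S hSnorm Y with h | h
      · exact hnotle h
      · rw [hsup] at h
        have hQbnorm : Qb.Normal := by
          have : V.map (QuotientGroup.mk' S) = Qb := by
            rw [hV_def, Subgroup.map_comap_eq,
              MonoidHom.range_eq_top.mpr (QuotientGroup.mk'_surjective S), top_inf_eq]
          rw [← this]
          exact h.map _ (QuotientGroup.mk'_surjective S)
        exact hQbne (hTmin.2.2 Qb hQbnorm hQble hQbbot)

end MainInduction

/-- A finite non-solvable group `G` has SN iff it has a unique minimal normal subgroup `S`,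
with `S` non-abelian and `G/S` Dedekind (equivalently: every subgroup of `G` containing `S`
is normal).  Moreover, in that case `S` is the socle of `G` and is a direct product of
isomorphic finite simple groups, and if `S` is simple then the conjugation action of `G` on
`S` is faithful. -/
theorem stmt_4 (G : Type) [Group G] [Finite G] (hns : ¬ IsSolvable G) :
    (HasSN G ↔
      ∃ S : Subgroup G, IsMinNormal S ∧ (∀ T : Subgroup G, IsMinNormal T → T = S) ∧
        (¬ ∀ x ∈ S, ∀ y ∈ S, x * y = y * x) ∧
        (∀ H : Subgroup G, S ≤ H → H.Normal)) ∧
    (HasSN G → ∀ S : Subgroup G, IsMinNormal S →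
      (S = socle G ∧
       (∃ (ι : Type) (T : Type) (_ : Group T), Finite ι ∧ Nonempty ι ∧ Finite T ∧
          IsSimpleGroup T ∧ Nonempty (S ≃* (ι → T))) ∧
       (IsSimpleGroup S → ∀ g : G, (∀ x ∈ S, g * x * g⁻¹ = x) → g = 1))) := by
  constructor
  · constructor
    · intro hsn
      obtain ⟨S₀, hS₀min, hS₀na⟩ :=
        exists_minNormal_nonabelian (Nat.card G) G inferInstance inferInstance le_rfl hsn hns
      exact ⟨S₀, hS₀min, fun T hT => hsn.minNormal_unique hS₀min hS₀na hT, hS₀na,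
        fun H hle => hsn.normal_of_nonabelian_le hS₀min.1 hS₀na hle⟩
    · rintro ⟨S, hSmin, huniq, hna, hded⟩
      intro N hN Y
      by_cases hNb : N = ⊥
      · left; rw [hNb]; exact bot_le
      · right
        obtain ⟨M, hMmin, hMle⟩ := exists_minNormal_le hN hNb
        have hMS : M = S := huniq M hMmin
        have hSN : S ≤ N := by rw [← hMS]; exact hMle
        exact hded _ (hSN.trans le_sup_left)
  · intro hsn S hSmin
    obtain ⟨S₀, hS₀min, hS₀na⟩ :=
      exists_minNormal_nonabelian (Nat.card G) G inferInstance inferInstance le_rfl hsn hns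
    have hSS₀ : S = S₀ := hsn.minNormal_unique hS₀min hS₀na hSmin
    have hna : ¬ ∀ x ∈ S, ∀ y ∈ S, x * y = y * x := by rw [hSS₀]; exact hS₀na
    refine ⟨?_, minNormal_decomposition hSmin, ?_⟩
    · have hset : {N : Subgroup G | IsMinNormal N} = {S} := by
        ext T
        simp only [Set.mem_setOf_eq, Set.mem_singleton_iff]
        constructor
        · intro hT
          rw [hSS₀]
          exact hsn.minNormal_unique hS₀min hS₀na hT
        · rintro rfl; exact hSmin
      rw [socle, hset, sSup_singleton]
    · intro _ g hg
      have hCnorm : (Subgroup.centralizer (S : Set G)).Normal := centralizer_normal hSmin.1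
      have hCbot : Subgroup.centralizer (S : Set G) = ⊥ := by
        by_contra hC
        obtain ⟨M, hMmin, hMle⟩ := exists_minNormal_le hCnorm hC
        have hMS : M = S := by
          rw [hsn.minNormal_unique hS₀min hS₀na hMmin, ← hSS₀]
        apply hna
        intro x hx y hy
        have hyM : y ∈ M := by rw [hMS]; exact hy
        exact (Subgroup.mem_centralizer_iff.mp (hMle hyM)) x hx
      have hgC : g ∈ Subgroup.centralizer (S : Set G) := by
        rw [Subgroup.mem_centralizer_iff]
        intro x hx
        have h1 : g * x * g⁻¹ = x := hg x hx
        calc x * g = (g * x * g⁻¹) * g := by rw [h1]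
          _ = g * x := by group
      rw [hCbot, Subgroup.mem_bot] at hgC
      exact hgC
end

section
/- Let G be a finite group, p a prime, r, s ∈ ℤG, y a central element of ℤG, and e a central idempotent of ℚG such that: (i) r² = s² = rs = sr = 0; (ii) er = r and es = 0; (iii) y(r+s) ∈ pℤG; (iv) yr ∉ pℤG. Then G does not have the nilpotent decomposition property (ND). -/
open MonoidAlgebra

/-- An element of `ℚ[G]` lies in (the image of) `ℤ[G]`: all its coefficients are integers. -/
def IsIntegerElt {G : Type*} [Group G] (x : MonoidAlgebra ℚ G) : Prop :=
  ∀ g : G, ∃ m : ℤ, x.coeff g = (m : ℚ)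

/-- A central element of a ring. -/
def IsCentralElt {R : Type*} [Ring R] (e : R) : Prop := ∀ x : R, e * x = x * e

/-- A primitive central idempotent: a nonzero central idempotent which is not the sum of
two nonzero orthogonal central idempotents. -/
def IsPCI {R : Type*} [Ring R] (e : R) : Prop :=
  IsIdempotentElem e ∧ IsCentralElt e ∧ e ≠ 0 ∧
    ¬ ∃ f g : R, IsIdempotentElem f ∧ IsIdempotentElem g ∧ IsCentralElt f ∧ IsCentralElt g ∧
      f ≠ 0 ∧ g ≠ 0 ∧ f * g = 0 ∧ e = f + g

/-- For a central idempotent `e` of a ring `R`, the component `Re` is a division ring: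
every nonzero element of `Re` has a two-sided inverse in `Re`, with unit `e`. -/
def ComponentIsDivision {R : Type*} [Ring R] (e : R) : Prop :=
  ∀ x : R, x * e = x → x ≠ 0 → ∃ y : R, y * e = y ∧ x * y = e ∧ y * x = e

/-- The nilpotent decomposition property: for every nilpotent element `n` of `ℤ[G]`
and every primitive central idempotent `e` of `ℚ[G]`, the product `n * e` lies in `ℤ[G]`. -/
def HasND (G : Type*) [Group G] : Prop :=
  ∀ n : MonoidAlgebra ℚ G, IsIntegerElt n → IsNilpotent n →
    ∀ e : MonoidAlgebra ℚ G, IsPCI e → IsIntegerElt (n * e)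

/-- `ℚ[G]` has at most one matrix component: for at most one primitive central idempotent `e`
the simple component `ℚ[G]e` fails to be a division ring. -/
def AtMostOneMatrixComponent (G : Type*) [Group G] : Prop :=
  ∀ e f : MonoidAlgebra ℚ G, IsPCI e → IsPCI f →
    ¬ ComponentIsDivision e → ¬ ComponentIsDivision f → e = f

/-- every nonzero central idempotent is a sum of PCIs -/
lemma exists_pci_decomp {R : Type*} [Ring R] [Algebra ℚ R] [FiniteDimensional ℚ R] :
    ∀ e : R, IsIdempotentElem e → IsCentralElt e → e ≠ 0 →
      ∃ L : List R, (∀ f ∈ L, IsPCI f) ∧ L.sum = e := by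
  suffices H : ∀ n : ℕ, ∀ e : R,
      Module.finrank ℚ (LinearMap.range (LinearMap.mulLeft ℚ e)) = n →
      IsIdempotentElem e → IsCentralElt e → e ≠ 0 →
      ∃ L : List R, (∀ f ∈ L, IsPCI f) ∧ L.sum = e by
    intro e; exact H _ e rfl
  intro n
  induction n using Nat.strong_induction_on with
  | _ n ih =>
    intro e hrank he hc hne
    by_cases hpci : IsPCI e
    · exact ⟨[e], by simpa using hpci, by simp⟩
    · have hdec : ∃ f g : R, IsIdempotentElem f ∧ IsIdempotentElem g ∧ IsCentralElt f ∧
          IsCentralElt g ∧ f ≠ 0 ∧ g ≠ 0 ∧ f * g = 0 ∧ e = f + g := by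
        by_contra h
        exact hpci ⟨he, hc, hne, h⟩
      obtain ⟨f, g, hf, hg, hfc, hgc, hf0, hg0, hfg, hefg⟩ := hdec
      have hgf : g * f = 0 := by rw [hgc f]; exact hfg
      have hfe : f * e = f := by rw [hefg, mul_add, hf, hfg, add_zero]
      have hge : g * e = g := by rw [hefg, mul_add, hgf, hg, zero_add]
      -- range inclusion lemma
      have key : ∀ a : R, a * e = a →
          LinearMap.range (LinearMap.mulLeft ℚ a) ≤ LinearMap.range (LinearMap.mulLeft ℚ e) := by
        intro a hae
        rintro _ ⟨x, rfl⟩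
        exact ⟨a * x, by simp [LinearMap.mulLeft_apply, ← mul_assoc, hc a, hae]⟩
      have hltf : LinearMap.range (LinearMap.mulLeft ℚ f) < LinearMap.range (LinearMap.mulLeft ℚ e) := by
        refine lt_of_le_of_ne (key f hfe) ?_
        intro heq
        have hgmem : g ∈ LinearMap.range (LinearMap.mulLeft ℚ e) :=
          ⟨g, by simp [LinearMap.mulLeft_apply, hc g, hge]⟩
        rw [← heq] at hgmem
        obtain ⟨x, hx⟩ := hgmem
        simp only [LinearMap.mulLeft_apply] at hx
        have : f * g = g := by
          conv_rhs => rw [← hx]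
          rw [← hx, ← mul_assoc, hf]
        exact hg0 (by rw [← this, hfg])
      have hltg : LinearMap.range (LinearMap.mulLeft ℚ g) < LinearMap.range (LinearMap.mulLeft ℚ e) := by
        refine lt_of_le_of_ne (key g hge) ?_
        intro heq
        have hfmem : f ∈ LinearMap.range (LinearMap.mulLeft ℚ e) :=
          ⟨f, by simp [LinearMap.mulLeft_apply, hc f, hfe]⟩
        rw [← heq] at hfmem
        obtain ⟨x, hx⟩ := hfmem
        simp only [LinearMap.mulLeft_apply] at hx
        have : g * f = f := by
          conv_rhs => rw [← hx]
          rw [← hx, ← mul_assoc, hg]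
        exact hf0 (by rw [← this, hgf])
      have hrf := Submodule.finrank_lt_finrank_of_lt hltf
      have hrg := Submodule.finrank_lt_finrank_of_lt hltg
      rw [hrank] at hrf hrg
      obtain ⟨Lf, hLf, hLfs⟩ := ih _ hrf f rfl hf hfc hf0
      obtain ⟨Lg, hLg, hLgs⟩ := ih _ hrg g rfl hg hgc hg0
      exact ⟨Lf ++ Lg, by
        intro x hx; rcases List.mem_append.mp hx with h | h
        exacts [hLf x h, hLg x h],
        by rw [List.sum_append, hLfs, hLgs, hefg]⟩

lemma isIntegerElt_add {G : Type*} [Group G] {a b : MonoidAlgebra ℚ G}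
    (ha : IsIntegerElt a) (hb : IsIntegerElt b) : IsIntegerElt (a + b) := by
  intro g
  obtain ⟨m, hm⟩ := ha g; obtain ⟨k, hk⟩ := hb g
  refine ⟨m + k, ?_⟩
  have : (a + b).coeff g = a.coeff g + b.coeff g := rfl
  rw [this, hm, hk]; push_cast; ring

lemma isIntegerElt_mul_listSum {G : Type*} [Group G] (a : MonoidAlgebra ℚ G)
    (L : List (MonoidAlgebra ℚ G)) (h : ∀ f ∈ L, IsIntegerElt (a * f)) :
    IsIntegerElt (a * L.sum) := by
  induction L with
  | nil => intro g; exact ⟨0, by simp⟩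
  | cons b t ihl =>
    rw [List.sum_cons, mul_add]
    exact isIntegerElt_add (h b (by simp)) (ihl fun x hx => h x (List.mem_cons_of_mem _ hx))

lemma isIntegerElt_listSum {G : Type*} [Group G] (L : List (MonoidAlgebra ℚ G))
    (h : ∀ a ∈ L, IsIntegerElt a) : IsIntegerElt L.sum := by
  induction L with
  | nil => intro g; exact ⟨0, by simp⟩
  | cons a t ihl =>
    rw [List.sum_cons]
    exact isIntegerElt_add (h a (by simp)) (ihl fun x hx => h x (List.mem_cons_of_mem _ hx))

/-- If `r, s ∈ ℤG`, `y ∈ ℤG` is central, and `e` is a central idempotent of `ℚG` with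
(i) `r² = s² = rs = sr = 0`, (ii) `er = r`, `es = 0`, (iii) `y(r+s) ∈ pℤG`,
(iv) `yr ∉ pℤG`, then `G` does not have ND. -/
theorem stmt_11 (G : Type) [Group G] [Finite G] (p : ℕ) (hp : p.Prime)
    (r s y e : MonoidAlgebra ℚ G)
    (hr : IsIntegerElt r) (hs : IsIntegerElt s) (hy : IsIntegerElt y)
    (hycentral : IsCentralElt y)
    (he : IsIdempotentElem e) (hecentral : IsCentralElt e)
    (h1 : r * r = 0 ∧ s * s = 0 ∧ r * s = 0 ∧ s * r = 0)
    (h2 : e * r = r ∧ e * s = 0)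
    (h3 : ∀ g : G, ∃ c : ℤ, (y * (r + s)).coeff g = (p : ℚ) * (c : ℚ))
    (h4 : ¬ ∀ g : G, ∃ c : ℤ, (y * r).coeff g = (p : ℚ) * (c : ℚ)) :
    ¬ HasND G := by
  intro hnd
  have := Fintype.ofFinite G
  have : FiniteDimensional ℚ (MonoidAlgebra ℚ G) :=
    Module.Finite.of_basis (MonoidAlgebra.basis G ℚ)
  have hp0 : (p : ℚ) ≠ 0 := by exact_mod_cast hp.ne_zero
  -- e ≠ 0
  have he0 : e ≠ 0 := by
    rintro rfl
    apply h4
    intro g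
    have : r = 0 := by rw [← h2.1, zero_mul]
    exact ⟨0, by simp [this]⟩
  set m : MonoidAlgebra ℚ G := y * (r + s) with hm
  set nn : MonoidAlgebra ℚ G := (p : ℚ)⁻¹ • m with hnn
  have hnint : IsIntegerElt nn := by
    intro g
    obtain ⟨c, hc⟩ := h3 g
    refine ⟨c, ?_⟩
    rw [hnn, MonoidAlgebra.coeff_smul_apply, ← hm] at *
    rw [hc, smul_eq_mul, ← mul_assoc, inv_mul_cancel₀ hp0, one_mul]
  have hts : (r + s) * (r + s) = 0 := by
    rw [add_mul, mul_add, mul_add, h1.1, h1.2.1, h1.2.2.1, h1.2.2.2]; simp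
  have hmm : m * m = 0 := by
    rw [hm]
    calc y * (r + s) * (y * (r + s)) = y * (((r + s) * y) * (r + s)) := by
          rw [mul_assoc, mul_assoc]
      _ = y * (y * ((r + s) * (r + s))) := by rw [← hycentral (r + s), mul_assoc]
      _ = 0 := by rw [hts, mul_zero, mul_zero]
  have hnil : IsNilpotent nn := by
    refine ⟨2, ?_⟩
    rw [pow_two, hnn, smul_mul_assoc, mul_smul_comm, hmm]
    simp
  obtain ⟨L, hL, hLsum⟩ := exists_pci_decomp e he hecentral he0
  have hint : IsIntegerElt (nn * e) := by
    rw [← hLsum]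
    exact isIntegerElt_mul_listSum nn L fun f hfL => hnd nn hnint hnil f (hL f hfL)
  have hne : nn * e = (p : ℚ)⁻¹ • (y * r) := by
    rw [hnn, smul_mul_assoc, hm, mul_assoc]
    congr 1
    rw [← hecentral (r + s), mul_add, h2.1, h2.2, add_zero]
  apply h4
  intro g
  obtain ⟨c, hc⟩ := hint g
  refine ⟨c, ?_⟩
  rw [hne, MonoidAlgebra.coeff_smul_apply, smul_eq_mul] at hc
  field_simp at hc
  linarith [hc]
end

section
/- Let p be an odd prime, k a positive integer, and X = ⟨x⟩ × ⟨z⟩ ≅ C_{p²} × C_{p^k} with x of order p² and z of order p^k. Then there exist α, β ∈ ℤX such that in ℤX one has (1−x^p)(1−x^p z) + (1−x^{−p})(1−x^{−p} z) ≡ (1−x)^{p+1} α (mod pℤX) and x(1−x^p)(1−x^p z) + x^{−1}(1−x^{−p})(1−x^{−p} z) ≡ (1−x)^{p+1} β (mod pℤX). -/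
lemma key_ring {A : Type} [CommRing A] (pp t s T S u P c₁ c₂ G1 G2 G3 G4 : A)
    (e1 : P = 1 - T + pp*c₁)
    (e2 : 1 - S = -(S*P) - pp*c₂)
    (e3 : t*s = 1) (e4 : T*S = 1)
    (e5 : (1-t)*G1 = 1 - T)
    (e6 : (1-t)*G2 = 1 - T^3)
    (e7 : (1-t)*G3 = 1 - T*t^2)
    (e8 : (1-t)*G4 = 1 - T^3*t^2) :
    (((1-T)*(1-T*u) + (1-S)*(1-S*u)) - (P*(1-t))*(-(S*G1) + u*S^2*G2)
        = pp * (-(c₁*(1-T*u) + c₂*(1-S*u)))) ∧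
    ((t*(1-T)*(1-T*u) + s*(1-S)*(1-S*u)) - (P*(1-t))*(-(s*S*G3) + u*s*S^2*G4)
        = pp * (-(t*c₁*(1-T*u) + s*c₂*(1-S*u)))) := by
  constructor
  · linear_combination (-(1-T*u))*e1 + ((1-S*u))*e2 + (P*(u*T*(T*S+1)-1))*e4
      + (P*S)*e5 + (-(P*u*S^2))*e6
  · linear_combination (-(t*(1-T*u)))*e1 + ((s*(1-S*u)))*e2
      + (P*t*(u*T*(T*S)^2 - T*S))*e3 + (P*(-t + u*T*t*(T*S+1)))*e4
      + (P*s*S)*e7 + (-(P*u*s*S^2))*e8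

open MonoidAlgebra in
/-- Let `p` be an odd prime, `k ≥ 1` and `X = ⟨x⟩ × ⟨z⟩ ≅ C_{p²} × C_{p^k}`.  Then there are
`α, β ∈ ℤX` with
`(1−x^p)(1−x^p z) + (1−x^{−p})(1−x^{−p} z) ≡ (1−x)^{p+1} α (mod pℤX)` and
`x(1−x^p)(1−x^p z) + x^{−1}(1−x^{−p})(1−x^{−p} z) ≡ (1−x)^{p+1} β (mod pℤX)`. -/
theorem stmt_13 (p : ℕ) (hp : p.Prime) (hodd : Odd p) (k : ℕ) (hk : 0 < k)
    (X : Type) [CommGroup X] [Finite X] (x z : X)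
    (hx : orderOf x = p ^ 2) (hz : orderOf z = p ^ k)
    (hmeet : Subgroup.zpowers x ⊓ Subgroup.zpowers z = ⊥)
    (hjoin : Subgroup.zpowers x ⊔ Subgroup.zpowers z = ⊤) :
    ∃ α β : MonoidAlgebra ℤ X,
      (∃ w : MonoidAlgebra ℤ X,
        ((1 - of ℤ X (x ^ p)) * (1 - of ℤ X (x ^ p * z)) +
            (1 - of ℤ X (x ^ p)⁻¹) * (1 - of ℤ X ((x ^ p)⁻¹ * z))) -
          (1 - of ℤ X x) ^ (p + 1) * α = (p : MonoidAlgebra ℤ X) * w) ∧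
      (∃ w : MonoidAlgebra ℤ X,
        (of ℤ X x * (1 - of ℤ X (x ^ p)) * (1 - of ℤ X (x ^ p * z)) +
            of ℤ X x⁻¹ * (1 - of ℤ X (x ^ p)⁻¹) * (1 - of ℤ X ((x ^ p)⁻¹ * z))) -
          (1 - of ℤ X x) ^ (p + 1) * β = (p : MonoidAlgebra ℤ X) * w) := by
  set A := MonoidAlgebra ℤ X
  set t : A := of ℤ X x with ht
  set s : A := of ℤ X x⁻¹ with hs
  set T : A := of ℤ X (x ^ p) with hT0
  set S : A := of ℤ X (x ^ p)⁻¹ with hS0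
  set u : A := of ℤ X z with hu
  set P : A := (1 - t) ^ p with hP
  have hT : T = t ^ p := by rw [hT0, ht, map_pow]
  have hS : S = s ^ p := by rw [hS0, hs, ← inv_pow, map_pow]
  have e3 : t * s = 1 := by rw [ht, hs, ← map_mul, mul_inv_cancel, map_one]
  have e4 : T * S = 1 := by rw [hT0, hS0, ← map_mul, mul_inv_cancel, map_one]
  -- freshman's dream
  obtain ⟨c₁, hc₁⟩ : ∃ c : A, (1 + -t) ^ p = 1 ^ p + (-t) ^ p + (p : A) * c := by
    obtain ⟨c, hc⟩ := exists_add_pow_prime_eq (x := (1 : A)) (y := -t) hp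
    exact ⟨1 * -t * c, by rw [hc]; ring⟩
  obtain ⟨c₂, hc₂⟩ : ∃ c : A, (1 + -s) ^ p = 1 ^ p + (-s) ^ p + (p : A) * c := by
    obtain ⟨c, hc⟩ := exists_add_pow_prime_eq (x := (1 : A)) (y := -s) hp
    exact ⟨1 * -s * c, by rw [hc]; ring⟩
  rw [hodd.neg_pow, one_pow] at hc₁ hc₂
  have e1 : P = 1 - T + (p : A) * c₁ := by
    rw [hP, hT]
    calc (1 - t) ^ p = (1 + -t) ^ p := by rw [sub_eq_add_neg (1 : A) t]
    _ = 1 + -t ^ p + p * c₁ := hc₁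
    _ = 1 - t ^ p + (p : A) * c₁ := by ring
  have hneg : (1 - s) ^ p = -(S * P) := by
    have h1s : (1 : A) - s = -(s * (1 - t)) := by linear_combination -e3
    rw [h1s, hodd.neg_pow, mul_pow, hS, hP]
  have e2 : (1 : A) - S = -(S * P) - (p : A) * c₂ := by
    rw [← hneg, hS]
    calc (1 : A) - s ^ p = (1 + -s) ^ p - (p : A) * c₂ := by rw [hc₂]; ring
    _ = (1 - s) ^ p - (p : A) * c₂ := by rw [sub_eq_add_neg (1 : A) s]
  -- geometric sums
  have hgeom : ∀ n : ℕ, (1 - t) * (∑ i ∈ Finset.range n, t ^ i) = 1 - t ^ n := by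
    intro n
    linear_combination (-1 : A) * geom_sum_mul t n
  set G1 : A := ∑ i ∈ Finset.range p, t ^ i
  set G2 : A := ∑ i ∈ Finset.range (p * 3), t ^ i
  set G3 : A := ∑ i ∈ Finset.range (p + 2), t ^ i
  set G4 : A := ∑ i ∈ Finset.range (p * 3 + 2), t ^ i
  have e5 : (1 - t) * G1 = 1 - T := by rw [hgeom p, hT]
  have e6 : (1 - t) * G2 = 1 - T ^ 3 := by rw [hgeom (p * 3), hT, pow_mul]
  have e7 : (1 - t) * G3 = 1 - T * t ^ 2 := by rw [hgeom (p + 2), hT, pow_add]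
  have e8 : (1 - t) * G4 = 1 - T ^ 3 * t ^ 2 := by
    rw [hgeom (p * 3 + 2), hT, pow_add, pow_mul]
  obtain ⟨k1, k2⟩ := key_ring ((p : A)) t s T S u P c₁ c₂ G1 G2 G3 G4 e1 e2 e3 e4 e5 e6 e7 e8
  have hpow : (1 - t) ^ (p + 1) = P * (1 - t) := by rw [hP, pow_succ]
  refine ⟨-(S*G1) + u*S^2*G2, -(s*S*G3) + u*s*S^2*G4,
    ⟨-(c₁*(1-T*u) + c₂*(1-S*u)), ?_⟩, ⟨-(t*c₁*(1-T*u) + s*c₂*(1-S*u)), ?_⟩⟩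
  · rw [map_mul, map_mul, hpow]
    exact k1
  · rw [map_mul, map_mul, hpow]
    calc t * (1 - T) * (1 - T * u) + s * (1 - S) * (1 - S * u)
        - P * (1 - t) * (-(s*S*G3) + u*s*S^2*G4)
        = (t * (1 - T) * (1 - T * u) + s * (1 - S) * (1 - S * u))
          - P * (1 - t) * (-(s*S*G3) + u*s*S^2*G4) := by ring
    _ = _ := k2
end

section
/- Let u be a unipotent matrix in SL₂(ℤ), i.e. u − 1 is nilpotent. Then u is conjugate inside SL₂(ℤ) to a matrix of the form [[1, m], [0, 1]] for some m ∈ ℤ. -/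
/-- Every unipotent matrix in `SL₂(ℤ)` is conjugate inside `SL₂(ℤ)` to an upper triangular
matrix `[[1, m], [0, 1]]` with `m ∈ ℤ`. -/
theorem stmt_15 (u : Matrix.SpecialLinearGroup (Fin 2) ℤ)
    (hu : IsNilpotent ((u : Matrix (Fin 2) (Fin 2) ℤ) - 1)) :
    ∃ (S : Matrix.SpecialLinearGroup (Fin 2) ℤ) (m : ℤ),
      ((S⁻¹ * u * S : Matrix.SpecialLinearGroup (Fin 2) ℤ) : Matrix (Fin 2) (Fin 2) ℤ)
        = !![1, m; 0, 1] := by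
  set A : Matrix (Fin 2) (Fin 2) ℤ := (u : Matrix (Fin 2) (Fin 2) ℤ) with hAdef
  have hcoe : ∀ (X Y : Matrix.SpecialLinearGroup (Fin 2) ℤ),
      ((X * Y : Matrix.SpecialLinearGroup (Fin 2) ℤ) :
        Matrix (Fin 2) (Fin 2) ℤ) = (X : Matrix (Fin 2) (Fin 2) ℤ) * Y := fun _ _ => rfl
  by_cases hA1 : A = 1
  · refine ⟨1, 0, ?_⟩
    show ((1 : Matrix.SpecialLinearGroup (Fin 2) ℤ)⁻¹ * u * 1 :
      Matrix.SpecialLinearGroup (Fin 2) ℤ).val = _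
    rw [inv_one, one_mul, mul_one]
    rw [← hAdef, hA1, Matrix.one_fin_two]
  · set M : Matrix (Fin 2) (Fin 2) ℤ := A - 1 with hMdef
    obtain ⟨k, hk⟩ := hu
    have hMne : M ≠ 0 := by simpa [hMdef, sub_eq_zero] using hA1
    have hkpos : k ≠ 0 := by rintro rfl; simp at hk
    have hdet0 : M.det = 0 := by
      have h1 : (M.det) ^ k = 0 := by
        rw [← Matrix.det_pow, hk, Matrix.det_zero]
      exact pow_eq_zero_iff hkpos |>.mp h1
    set a : ℤ := A 0 0 with ha
    set b : ℤ := A 0 1 with hb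
    set c : ℤ := A 1 0 with hc
    set d : ℤ := A 1 1 with hd
    have hAm : A = !![a, b; c, d] := by
      ext i j; fin_cases i <;> fin_cases j <;> rfl
    have hMm : M = !![a - 1, b; c, d - 1] := by
      rw [hMdef, hAm, Matrix.one_fin_two]
      ext i j; fin_cases i <;> fin_cases j <;> simp
    clear_value a b c d
    have hdet0' : (a - 1) * (d - 1) - b * c = 0 := by
      rw [hMm, Matrix.det_fin_two_of] at hdet0
      exact hdet0
    -- trace zero
    have htr : a + d = 2 := by
      set t0 : ℤ := M.trace with ht0
      have ht0' : t0 = (a - 1) + (d - 1) := by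
        rw [ht0, hMm, Matrix.trace_fin_two_of]
      clear_value t0
      have hCH : M * M = t0 • M := by
        rw [hMm, ht0']
        ext i j
        fin_cases i <;> fin_cases j <;>
          simp [Matrix.mul_apply, Fin.sum_univ_two]
        all_goals (try ring1)
        all_goals linear_combination -hdet0'
      have hpow : ∀ n : ℕ, M ^ (n + 1) = t0 ^ n • M := by
        intro n
        induction n with
        | zero => simp
        | succ n ih =>
          rw [pow_succ, ih, smul_mul_assoc, hCH, smul_smul, ← pow_succ]
      have ht00 : t0 = 0 := by
        rcases k with _ | k
        · exact absurd rfl hkpos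
        rcases k with _ | k
        · exact absurd (by simpa using hk) hMne
        · have h2 : t0 ^ (k + 1) • M = 0 := by rw [← hpow, hk]
          obtain ⟨i, j, hij⟩ : ∃ i j, M i j ≠ 0 := by
            by_contra h
            push_neg at h
            exact hMne (by ext i j; simpa using h i j)
          have h3 : t0 ^ (k + 1) * M i j = 0 := by
            have := congrFun (congrFun h2 i) j
            simpa using this
          rcases mul_eq_zero.mp h3 with h | h
          · exact pow_eq_zero_iff (Nat.succ_ne_zero k) |>.mp h
          · exact absurd h hij
      have : (a - 1) + (d - 1) = 0 := by rw [← ht0', ht00]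
      linarith
    by_cases hpq : a - 1 = 0 ∧ b = 0
    · -- lower triangular case
      obtain ⟨hp0, hq0⟩ := hpq
      have ha1 : a = 1 := by linarith
      have hd1 : d = 1 := by linarith
      refine ⟨(⟨!![0, -1; 1, 0], by simp [Matrix.det_fin_two_of]⟩ : Matrix.SpecialLinearGroup (Fin 2) ℤ), -c, ?_⟩
      show (Matrix.adjugate !![0,-1;1,0]) * A * !![0,-1;1,0] = _
      rw [hAm, ha1, hq0, hd1, Matrix.adjugate_fin_two]
      ext i j
      fin_cases i <;> fin_cases j <;>
        simp [Matrix.mul_apply, Fin.sum_univ_two]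
    · -- general case
      push_neg at hpq
      set g : ℤ := (Int.gcd b (a - 1) : ℤ) with hg
      have hgne : g ≠ 0 := by
        rw [hg]
        norm_cast
        rw [Int.gcd_eq_zero_iff]
        rintro ⟨h1, h2⟩
        exact hpq h2 h1
      obtain ⟨x, hx⟩ : g ∣ b := Int.gcd_dvd_left b (a - 1)
      obtain ⟨y', hy'⟩ : g ∣ (a - 1) := Int.gcd_dvd_right b (a - 1)
      clear_value g
      have hcop : IsCoprime x y' := by
        rw [Int.isCoprime_iff_gcd_eq_one]
        have h5 : Int.gcd b (a - 1) = g.natAbs * Int.gcd x y' := by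
          rw [hx, hy']; exact Int.gcd_mul_left g x y'
        have h6 : g.natAbs = Int.gcd b (a - 1) := by
          rw [hg]; simp
        rw [h6] at h5
        have h7 : Int.gcd b (a - 1) ≠ 0 := by
          intro h; apply hgne; rw [hg, h]; simp
        exact (mul_left_cancel₀ h7 (by rw [mul_one]; exact h5)).symm
      obtain ⟨t, s', hts⟩ := hcop.neg_right
      have hsq : (a - 1) ^ 2 + b * c = 0 := by
        linear_combination (a - 1) * htr - hdet0'
      have h2 : g * (g * y' ^ 2 + c * x) = 0 := by
        linear_combination (-(a - 1 + g * y')) * hy' + hsq + (-c) * hx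
      have hkey : g * y' ^ 2 + c * x = 0 := by
        rcases mul_eq_zero.mp h2 with h | h
        · exact absurd h hgne
        · exact h
      have hArep : A = !![1 + g * y', g * x; c, 1 - g * y'] := by
        rw [hAm, show a = 1 + g * y' from by linarith, hx,
          show d = 1 - g * y' from by linarith]
      refine ⟨(⟨!![x, -s'; -y', t], by rw [Matrix.det_fin_two_of]; linear_combination hts⟩ : Matrix.SpecialLinearGroup (Fin 2) ℤ),
        t * ((1 + g * y') * (-s') + g * x * t) + s' * (c * (-s') + (1 - g * y') * t), ?_⟩
      show (Matrix.adjugate !![x, -s'; -y', t]) * A * !![x, -s'; -y', t] = _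
      rw [hArep, Matrix.adjugate_fin_two_of, Matrix.mul_fin_two, Matrix.mul_fin_two]
      ext i j
      fin_cases i <;> fin_cases j <;> simp
      · linear_combination s' * hkey + hts
      · ring
      · linear_combination x * hkey
      · linear_combination (-s') * hkey + hts
end

section
/- Let G be a finite group. The following are equivalent: (1) G has property SN; (2) for every bicyclic nilpotent element n of ℤG and every normal subgroup N of G one has n·ε(G,N) ∈ ℤG; (3) for every bicyclic nilpotent element n of ℤG and every normal subgroup N of G one has n·N̂ ∈ ℤG. -/
open MonoidAlgebra

open MonoidAlgebra in
/-- `H̃ = Σ_{x ∈ H} x`, the sum of the elements of a subgroup inside the group algebra. -/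
noncomputable def tilde {G : Type*} [Group G] (H : Subgroup G) : MonoidAlgebra ℚ G :=
  ∑ᶠ h ∈ (H : Set G), MonoidAlgebra.of ℚ G h

/-- `Ĥ = (1/|H|) Σ_{x ∈ H} x`. -/
noncomputable def hat {G : Type*} [Group G] (H : Subgroup G) : MonoidAlgebra ℚ G :=
  (Nat.card H : ℚ)⁻¹ • tilde H

open scoped Classical in
/-- `ε(G,G) = Ĝ`, and for a proper normal subgroup `N` of `G`,
`ε(G,N) = N̂ ∏ (1 - M̂)`, the product running over all the preimages `M` in `G` of the
minimal normal subgroups of `G/N`, i.e. over the normal subgroups of `G` minimal among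
those properly containing `N`.  (The factors `1 - M̂` are central, so the product does not
depend on the order in which it is taken.) -/
noncomputable def epsilonIdem {G : Type*} [Group G] [Finite G] (N : Subgroup G) :
    MonoidAlgebra ℚ G :=
  if N = ⊤ then hat (⊤ : Subgroup G)
  else hat N *
    (((Set.toFinite {M : Subgroup G | M.Normal ∧ N < M ∧
        ∀ M' : Subgroup G, M'.Normal → N < M' → M' ≤ M → M' = M}).toFinset.toList.map
      (fun M => 1 - hat M)).prod)

/-- A bicyclic nilpotent element of `ℤ[G] ⊆ ℚ[G]`: one of the form `(1-h)gH̃` or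
`H̃g(1-h)` with `g ∈ G`, `h ∈ H ≤ G`. -/
def IsBicyclicNilpotent {G : Type*} [Group G] (n : MonoidAlgebra ℚ G) : Prop :=
  ∃ (H : Subgroup G) (h g : G), h ∈ H ∧
    (n = (1 - MonoidAlgebra.of ℚ G h) * MonoidAlgebra.of ℚ G g * tilde H ∨
     n = tilde H * MonoidAlgebra.of ℚ G g * (1 - MonoidAlgebra.of ℚ G h))

section AuxSN

open MonoidAlgebra
open scoped Classical Pointwise

variable {G : Type*} [Group G] [Finite G]

noncomputable def sfin (H : Subgroup G) : Finset G := (Set.toFinite (H : Set G)).toFinset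

lemma mem_sfin {H : Subgroup G} {x : G} : x ∈ sfin H ↔ x ∈ H := by simp [sfin]

lemma card_sfin (H : Subgroup G) : (sfin H).card = Nat.card H := by
  rw [sfin, ← Set.ncard_eq_toFinset_card _ (Set.toFinite _)]
  exact (Nat.card_coe_set_eq _).symm

lemma tilde_eq_sum (H : Subgroup G) :
    tilde H = ∑ x ∈ sfin H, MonoidAlgebra.of ℚ G x := by
  rw [tilde, ← finsum_mem_coe_finset]; congr 1; simp [sfin]

lemma tilde_apply (H : Subgroup G) (x : G) : (tilde H).coeff x = if x ∈ H then 1 else 0 := by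
  rw [tilde_eq_sum, MonoidAlgebra.coeff_sum, Finset.sum_apply']
  simp only [MonoidAlgebra.of_apply, MonoidAlgebra.coeff_single, Finsupp.single_apply]
  rw [Finset.sum_ite_eq' (sfin H) x (fun _ => (1:ℚ))]
  simp [mem_sfin]

lemma of_mul_tilde_apply (a : G) (H : Subgroup G) (x : G) :
    (MonoidAlgebra.of ℚ G a * tilde H).coeff x = if a⁻¹ * x ∈ H then 1 else 0 := by
  rw [MonoidAlgebra.of_apply, MonoidAlgebra.single_mul_apply, tilde_apply, one_mul]

lemma tilde_mul_of_apply (a : G) (H : Subgroup G) (x : G) :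
    (tilde H * MonoidAlgebra.of ℚ G a).coeff x = if x * a⁻¹ ∈ H then 1 else 0 := by
  rw [MonoidAlgebra.of_apply, MonoidAlgebra.mul_single_apply, tilde_apply, mul_one]

lemma tilde_mul_of_mem {H : Subgroup G} {h : G} (hh : h ∈ H) :
    tilde H * MonoidAlgebra.of ℚ G h = tilde H := by
  ext x
  rw [tilde_mul_of_apply, tilde_apply]
  congr 1
  exact propext (H.mul_mem_cancel_right (H.inv_mem hh))

lemma of_mem_mul_tilde {H : Subgroup G} {h : G} (hh : h ∈ H) :
    MonoidAlgebra.of ℚ G h * tilde H = tilde H := by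
  ext x
  rw [of_mul_tilde_apply, tilde_apply]
  congr 1
  exact propext (H.mul_mem_cancel_left (H.inv_mem hh))

lemma conj_iff (K : Subgroup G) (hK : K.Normal) (t x : G) : t⁻¹ * x ∈ K ↔ x * t⁻¹ ∈ K := by
  constructor
  · intro h; have := hK.conj_mem _ h t; simpa [mul_assoc] using this
  · intro h; have := hK.conj_mem _ h t⁻¹; simpa [mul_assoc] using this

lemma tilde_comm (K : Subgroup G) (hK : K.Normal) (a : MonoidAlgebra ℚ G) :
    a * tilde K = tilde K * a := by
  ext x
  rw [MonoidAlgebra.mul_apply_left, MonoidAlgebra.mul_apply_right]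
  apply Finsupp.sum_congr
  intro t _
  rw [tilde_apply, tilde_apply, if_congr (conj_iff K hK t x) rfl rfl, mul_comm]

lemma hat_comm (K : Subgroup G) (hK : K.Normal) (a : MonoidAlgebra ℚ G) :
    a * hat K = hat K * a := by
  rw [hat, mul_smul_comm, smul_mul_assoc, tilde_comm K hK]

lemma tilde_mul_tilde (H K : Subgroup G) (hK : K.Normal) :
    tilde H * tilde K = (Nat.card (H ⊓ K : Subgroup G) : ℚ) • tilde (H ⊔ K) := by
  haveI := hK
  ext t
  rw [tilde_eq_sum H, Finset.sum_mul, MonoidAlgebra.coeff_sum, Finset.sum_apply']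
  have h1 : ∀ x : G, (MonoidAlgebra.of ℚ G x * tilde K).coeff t = if x⁻¹ * t ∈ K then 1 else 0 :=
    fun x => of_mul_tilde_apply x K t
  simp only [h1]
  rw [Finset.sum_boole]
  rw [MonoidAlgebra.coeff_smul_apply, tilde_apply, smul_eq_mul]
  by_cases ht : t ∈ H ⊔ K
  · rw [if_pos ht, mul_one]
    have ht' : t ∈ (H : Set G) * (K : Set G) := by
      rw [← Subgroup.mul_normal H K]; exact_mod_cast ht
    obtain ⟨x₀, hx₀, y₀, hy₀, hxy⟩ := ht'
    have h2 : x₀⁻¹ * t ∈ K := by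
      have : x₀⁻¹ * t = y₀ := by rw [← hxy]; group
      rw [this]; exact hy₀
    have hfilt : Finset.filter (fun x => x⁻¹ * t ∈ K) (sfin H)
        = Finset.image (fun z => x₀ * z) (sfin (H ⊓ K)) := by
      ext x
      simp only [Finset.mem_filter, Finset.mem_image, mem_sfin]
      constructor
      · rintro ⟨hxH, hxK⟩
        refine ⟨x₀⁻¹ * x, ⟨?_, ?_⟩, by group⟩
        · exact H.mul_mem (H.inv_mem hx₀) hxH
        · have : x₀⁻¹ * x = (x₀⁻¹ * t) * (x⁻¹ * t)⁻¹ := by group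
          rw [this]; exact K.mul_mem h2 (K.inv_mem hxK)
      · rintro ⟨z, ⟨hz : z ∈ H ⊓ K, rfl⟩⟩
        obtain ⟨hzH, hzK⟩ := hz
        refine ⟨H.mul_mem hx₀ hzH, ?_⟩
        have : (x₀ * z)⁻¹ * t = z⁻¹ * (x₀⁻¹ * t) := by group
        rw [this]; exact K.mul_mem (K.inv_mem hzK) h2
    rw [hfilt, Finset.card_image_of_injective _ (mul_right_injective x₀), card_sfin]
  · rw [if_neg ht, mul_zero]
    have hempty : Finset.filter (fun x => x⁻¹ * t ∈ K) (sfin H) = ∅ := by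
      ext x
      simp only [Finset.mem_filter, mem_sfin, Finset.notMem_empty, iff_false, not_and]
      intro hxH hxK
      exact ht (by
        have : t = x * (x⁻¹ * t) := by group
        rw [this]
        exact Subgroup.mul_mem _ (Subgroup.mem_sup_left hxH) (Subgroup.mem_sup_right hxK))
    rw [hempty]
    simp

lemma tilde_mul_hat (H K : Subgroup G) (hK : K.Normal) :
    tilde H * hat K =
      ((Nat.card (H ⊓ K : Subgroup G) : ℚ) / (Nat.card K : ℚ)) • tilde (H ⊔ K) := by
  rw [hat, mul_smul_comm, tilde_mul_tilde H K hK, smul_smul, inv_mul_eq_div]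

lemma card_K_ne_zero (K : Subgroup G) : (Nat.card K : ℚ) ≠ 0 := by
  exact_mod_cast Nat.card_pos.ne'

lemma tilde_mul_hat_of_le {H K : Subgroup G} (hK : K.Normal) (hle : K ≤ H) :
    tilde H * hat K = tilde H := by
  rw [tilde_mul_hat H K hK, inf_eq_right.mpr hle, sup_eq_left.mpr hle,
    div_self (card_K_ne_zero K), one_smul]

lemma kill_left {T : Subgroup G} (hT : T.Normal) {h : G} (hh : h ∈ T) (g : G) :
    (1 - MonoidAlgebra.of ℚ G h) * (MonoidAlgebra.of ℚ G g * tilde T) = 0 := by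
  have hconj : g⁻¹ * h * g ∈ T := by
    have := hT.conj_mem _ hh g⁻¹; simpa [mul_assoc] using this
  have h1 : h * g = g * (g⁻¹ * h * g) := by group
  calc (1 - MonoidAlgebra.of ℚ G h) * (MonoidAlgebra.of ℚ G g * tilde T)
      = MonoidAlgebra.of ℚ G g * tilde T - MonoidAlgebra.of ℚ G (h * g) * tilde T := by
        rw [sub_mul, one_mul, ← mul_assoc, ← map_mul]
    _ = 0 := by
        rw [h1, map_mul, mul_assoc, of_mem_mul_tilde hconj, sub_self]

lemma kill_right {T : Subgroup G} (hT : T.Normal) {h : G} (hh : h ∈ T) (g : G) :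
    (tilde T * MonoidAlgebra.of ℚ G g) * (1 - MonoidAlgebra.of ℚ G h) = 0 := by
  have hconj : g * h * g⁻¹ ∈ T := hT.conj_mem _ hh g
  have h1 : g * h = (g * h * g⁻¹) * g := by group
  calc (tilde T * MonoidAlgebra.of ℚ G g) * (1 - MonoidAlgebra.of ℚ G h)
      = tilde T * MonoidAlgebra.of ℚ G g - tilde T * MonoidAlgebra.of ℚ G (g * h) := by
        rw [mul_sub, mul_one, mul_assoc, ← map_mul]
    _ = 0 := by
        rw [h1, map_mul, ← mul_assoc, tilde_mul_of_mem hconj, sub_self]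

lemma integer_sub_ite (p q : Prop) [Decidable p] [Decidable q] :
    ∃ m : ℤ, ((if p then (1:ℚ) else 0) - (if q then (1:ℚ) else 0)) = (m : ℚ) := by
  split_ifs
  · exact ⟨0, by norm_num⟩
  · exact ⟨1, by norm_num⟩
  · exact ⟨-1, by norm_num⟩
  · exact ⟨0, by norm_num⟩

lemma bicyclic_integer {n : MonoidAlgebra ℚ G} (hn : IsBicyclicNilpotent n) :
    IsIntegerElt n := by
  obtain ⟨H, h, g, hh, hcase | hcase⟩ := hn <;> intro x
  · have : n.coeff x = (if g⁻¹ * x ∈ H then (1:ℚ) else 0)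
        - (if (h * g)⁻¹ * x ∈ H then (1:ℚ) else 0) := by
      rw [hcase, mul_assoc, sub_mul, one_mul, MonoidAlgebra.coeff_sub, Finsupp.sub_apply, of_mul_tilde_apply,
        ← mul_assoc, ← map_mul, of_mul_tilde_apply]
    rw [this]; exact integer_sub_ite _ _
  · have : n.coeff x = (if x * g⁻¹ ∈ H then (1:ℚ) else 0)
        - (if x * (g * h)⁻¹ ∈ H then (1:ℚ) else 0) := by
      rw [hcase, mul_sub, mul_one, MonoidAlgebra.coeff_sub, Finsupp.sub_apply, tilde_mul_of_apply,
        mul_assoc, ← map_mul, tilde_mul_of_apply]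
    rw [this]; exact integer_sub_ite _ _

lemma sn_mul_hat (hsn : HasSN G) {n : MonoidAlgebra ℚ G} (hn : IsBicyclicNilpotent n)
    {K : Subgroup G} (hK : K.Normal) : n * hat K = n ∨ n * hat K = 0 := by
  obtain ⟨H, h, g, hh, hcase | hcase⟩ := hn
  · rcases hsn K hK H with hle | hnorm
    · left
      rw [hcase, mul_assoc, mul_assoc, tilde_mul_hat_of_le hK hle, ← mul_assoc]
    · right
      have hnorm' : (H ⊔ K).Normal := by rwa [sup_comm K H] at hnorm
      rw [hcase, mul_assoc, mul_assoc, tilde_mul_hat H K hK, mul_smul_comm, mul_smul_comm,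
        kill_left hnorm' (Subgroup.mem_sup_left hh) g, smul_zero]
  · have key : n * hat K = (tilde H * hat K) * (MonoidAlgebra.of ℚ G g *
        (1 - MonoidAlgebra.of ℚ G h)) := by
      rw [hcase, mul_assoc, mul_assoc, hat_comm K hK, ← mul_assoc, ← mul_assoc,
        mul_assoc (tilde H), hat_comm K hK (MonoidAlgebra.of ℚ G g), ← mul_assoc, mul_assoc]
    rcases hsn K hK H with hle | hnorm
    · left
      rw [key, tilde_mul_hat_of_le hK hle, hcase, mul_assoc]
    · right
      have hnorm' : (H ⊔ K).Normal := by rwa [sup_comm K H] at hnorm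
      rw [key, tilde_mul_hat H K hK, smul_mul_assoc, smul_eq_zero]
      right
      rw [← mul_assoc]
      exact kill_right hnorm' (Subgroup.mem_sup_left hh) g

lemma stay_pair (hsn : HasSN G) {n : MonoidAlgebra ℚ G} (hn : IsBicyclicNilpotent n) :
    ∀ l : List (MonoidAlgebra ℚ G),
      (∀ p ∈ l, ∃ M : Subgroup G, M.Normal ∧ p = 1 - hat M) →
      ∀ x : MonoidAlgebra ℚ G, (x = n ∨ x = 0) → (x * l.prod = n ∨ x * l.prod = 0)
  | [], _, x, hx => by simpa using hx
  | p :: l, hl, x, hx => by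
    have hstep : x * p = n ∨ x * p = 0 := by
      obtain ⟨M, hM, rfl⟩ := hl p List.mem_cons_self
      rcases hx with rfl | rfl
      · rcases sn_mul_hat hsn hn hM with h1 | h1
        · right; rw [mul_sub, mul_one, h1, sub_self]
        · left; rw [mul_sub, mul_one, h1, sub_zero]
      · right; rw [zero_mul]
    have := stay_pair hsn hn l (fun q hq => hl q (List.mem_cons_of_mem p hq)) (x * p) hstep
    rwa [List.prod_cons, ← mul_assoc]

lemma sn_eps (hsn : HasSN G) {n : MonoidAlgebra ℚ G} (hn : IsBicyclicNilpotent n)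
    {N : Subgroup G} (hN : N.Normal) :
    n * epsilonIdem N = n ∨ n * epsilonIdem N = 0 := by
  by_cases htop : N = ⊤
  · subst htop
    rw [epsilonIdem, if_pos rfl]
    exact sn_mul_hat hsn hn hN
  · rw [epsilonIdem, if_neg htop, ← mul_assoc]
    refine stay_pair hsn hn _ ?_ (n * hat N) (sn_mul_hat hsn hn hN)
    intro p hp
    obtain ⟨M, hMl, rfl⟩ := List.mem_map.mp hp
    have hM := (Set.Finite.mem_toFinset _).mp (Finset.mem_toList.mp hMl)
    exact ⟨M, hM.1, rfl⟩

lemma int_of_pair {x n : MonoidAlgebra ℚ G} (h : x = n ∨ x = 0)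
    (hn : IsIntegerElt n) : IsIntegerElt x := by
  rcases h with rfl | rfl
  · exact hn
  · intro g; exact ⟨0, by simp⟩

lemma witness_exists {N Y : Subgroup G} (hN : N.Normal) (hT : ¬ (N ⊔ Y).Normal) :
    ∃ h a : G, h ∈ Y ∧ a⁻¹ * h * a ∉ N ⊔ Y := by
  haveI := hN
  by_contra hc
  push_neg at hc
  apply hT
  constructor
  intro t ht g
  have ht' : t ∈ (Y : Set G) * (N : Set G) := by
    rw [← Subgroup.mul_normal Y N]
    exact_mod_cast (sup_comm N Y ▸ ht : t ∈ Y ⊔ N)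
  obtain ⟨y, hy, m, hm, rfl⟩ := ht'
  have h1 : g * (y * m) * g⁻¹ = (g * y * g⁻¹) * (g * m * g⁻¹) := by group
  rw [h1]
  apply Subgroup.mul_mem
  · have := hc y g⁻¹ hy
    simpa using this
  · exact Subgroup.mem_sup_left (hN.conj_mem m hm g)

lemma witness_w_apply {T : Subgroup G} {h a : G} (hconj : a⁻¹ * h * a ∉ T) :
    ((1 - MonoidAlgebra.of ℚ G h) * (MonoidAlgebra.of ℚ G a * tilde T)).coeff a = 1 := by
  have hne : (h * a)⁻¹ * a ∉ T := by
    intro hmem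
    apply hconj
    have he : ((h * a)⁻¹ * a)⁻¹ = a⁻¹ * h * a := by group
    exact he ▸ T.inv_mem hmem
  rw [sub_mul, one_mul, MonoidAlgebra.coeff_sub, Finsupp.sub_apply, of_mul_tilde_apply, ← mul_assoc, ← map_mul,
    of_mul_tilde_apply, if_pos (by simpa using T.one_mem), if_neg hne, sub_zero]

lemma n_mul_hat_eq {N Y : Subgroup G} (hN : N.Normal) (h a : G) :
    ((1 - MonoidAlgebra.of ℚ G h) * MonoidAlgebra.of ℚ G a * tilde Y) * hat N
      = ((Nat.card (Y ⊓ N : Subgroup G) : ℚ) / (Nat.card N : ℚ)) •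
        ((1 - MonoidAlgebra.of ℚ G h) * (MonoidAlgebra.of ℚ G a * tilde (N ⊔ Y))) := by
  rw [mul_assoc, mul_assoc, tilde_mul_hat Y N hN, mul_smul_comm, mul_smul_comm, sup_comm Y N]

lemma c_pos_lt_one {N Y : Subgroup G} (hNY : ¬ N ≤ Y) :
    0 < ((Nat.card (Y ⊓ N : Subgroup G) : ℚ) / (Nat.card N : ℚ)) ∧
      ((Nat.card (Y ⊓ N : Subgroup G) : ℚ) / (Nat.card N : ℚ)) < 1 := by
  have hNpos : (0:ℚ) < (Nat.card N : ℚ) := by exact_mod_cast Nat.card_pos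
  have hIpos : (0:ℚ) < (Nat.card (Y ⊓ N : Subgroup G) : ℚ) := by exact_mod_cast Nat.card_pos
  constructor
  · exact div_pos hIpos hNpos
  · rw [div_lt_one hNpos]
    have hle : Nat.card (Y ⊓ N : Subgroup G) ≤ Nat.card N :=
      Subgroup.card_le_of_le inf_le_right
    have hne : Nat.card (Y ⊓ N : Subgroup G) ≠ Nat.card N := by
      intro heq
      have : Y ⊓ N = N := Subgroup.eq_of_le_of_card_ge inf_le_right (le_of_eq heq.symm)
      exact hNY (this ▸ inf_le_left)
    exact_mod_cast lt_of_le_of_ne hle hne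

lemma c_not_integer {c : ℚ} (h0 : 0 < c) (h1 : c < 1) (m : ℤ) : c ≠ (m : ℚ) := by
  intro rfl'
  rcases lt_or_ge 0 m with hm | hm
  · have : (1:ℚ) ≤ (m:ℚ) := by exact_mod_cast hm
    rw [rfl'] at h1; linarith
  · have : (m:ℚ) ≤ 0 := by exact_mod_cast hm
    rw [rfl'] at h0; linarith

lemma w_mul_one_sub_hat {T M : Subgroup G} (hM : M.Normal) (hTM : (T ⊔ M).Normal)
    {h : G} (hh : h ∈ T) (a : G) :
    ((1 - MonoidAlgebra.of ℚ G h) * (MonoidAlgebra.of ℚ G a * tilde T)) * (1 - hat M)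
      = (1 - MonoidAlgebra.of ℚ G h) * (MonoidAlgebra.of ℚ G a * tilde T) := by
  rw [mul_sub, mul_one]
  have hz : ((1 - MonoidAlgebra.of ℚ G h) * (MonoidAlgebra.of ℚ G a * tilde T)) * hat M
      = 0 := by
    rw [mul_assoc, mul_assoc, tilde_mul_hat T M hM, mul_smul_comm, mul_smul_comm,
      kill_left hTM (Subgroup.mem_sup_left hh) a, smul_zero]
  rw [hz, sub_zero]

lemma mul_list_prod_eq_self {w : MonoidAlgebra ℚ G} :
    ∀ l : List (MonoidAlgebra ℚ G), (∀ p ∈ l, w * p = w) → w * l.prod = w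
  | [], _ => by simp
  | p :: l, hl => by
    rw [List.prod_cons, ← mul_assoc, hl p List.mem_cons_self,
      mul_list_prod_eq_self l (fun q hq => hl q (List.mem_cons_of_mem p hq))]

end AuxSN

/-- `G` has SN iff every bicyclic nilpotent element has ND with respect to the idempotents
`ε(G,N)`, iff every bicyclic nilpotent element has ND with respect to the idempotents `N̂`,
for `N` running through the normal subgroups of `G`. -/
theorem stmt_18 (G : Type) [Group G] [Finite G] :
    (HasSN G ↔ ∀ n : MonoidAlgebra ℚ G, IsBicyclicNilpotent n →
      ∀ N : Subgroup G, N.Normal → IsIntegerElt (n * epsilonIdem N)) ∧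
    (HasSN G ↔ ∀ n : MonoidAlgebra ℚ G, IsBicyclicNilpotent n →
      ∀ N : Subgroup G, N.Normal → IsIntegerElt (n * hat N)) := by
  classical
  have imp_eps : HasSN G → ∀ n : MonoidAlgebra ℚ G, IsBicyclicNilpotent n →
      ∀ N : Subgroup G, N.Normal → IsIntegerElt (n * epsilonIdem N) :=
    fun hsn n hn N hN => int_of_pair (sn_eps hsn hn hN) (bicyclic_integer hn)
  have imp_hat : HasSN G → ∀ n : MonoidAlgebra ℚ G, IsBicyclicNilpotent n →
      ∀ N : Subgroup G, N.Normal → IsIntegerElt (n * hat N) :=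
    fun hsn n hn N hN => int_of_pair (sn_mul_hat hsn hn hN) (bicyclic_integer hn)
  have conv_hat : (∀ n : MonoidAlgebra ℚ G, IsBicyclicNilpotent n →
      ∀ N : Subgroup G, N.Normal → IsIntegerElt (n * hat N)) → HasSN G := by
    intro hint
    by_contra hsn
    unfold HasSN at hsn
    push_neg at hsn
    obtain ⟨N, hN, Y, hNY, hT⟩ := hsn
    obtain ⟨h, a, hh, hconj⟩ := witness_exists hN hT
    have hbc : IsBicyclicNilpotent ((1 - of ℚ G h) * of ℚ G a * tilde Y) :=
      ⟨Y, h, a, hh, Or.inl rfl⟩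
    obtain ⟨m, hm⟩ := hint _ hbc N hN a
    have hval : (((1 - of ℚ G h) * of ℚ G a * tilde Y) * hat N).coeff a
        = (Nat.card (Y ⊓ N : Subgroup G) : ℚ) / (Nat.card N : ℚ) := by
      rw [n_mul_hat_eq hN h a, MonoidAlgebra.coeff_smul_apply, witness_w_apply hconj, smul_eq_mul,
        mul_one]
    obtain ⟨hc0, hc1⟩ := c_pos_lt_one hNY
    exact c_not_integer hc0 hc1 m (by rw [← hval, hm])
  have conv_eps : (∀ n : MonoidAlgebra ℚ G, IsBicyclicNilpotent n →
      ∀ N : Subgroup G, N.Normal → IsIntegerElt (n * epsilonIdem N)) → HasSN G := by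
    intro hint
    by_contra hsn
    unfold HasSN at hsn
    push_neg at hsn
    have hSne : {N : Subgroup G | N.Normal ∧ ∃ Y, ¬ N ≤ Y ∧ ¬ (N ⊔ Y).Normal}.Nonempty := by
      obtain ⟨N, hN, Y, h1, h2⟩ := hsn
      exact ⟨N, hN, Y, h1, h2⟩
    obtain ⟨N, hNS, hmax⟩ := Set.Finite.exists_maximalFor id _ (Set.toFinite _) hSne
    obtain ⟨hN, Y, hNY, hT⟩ := hNS
    have hNtop : N ≠ ⊤ := by
      rintro rfl
      rw [top_sup_eq] at hT
      exact hT inferInstance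
    obtain ⟨h, a, hh, hconj⟩ := witness_exists hN hT
    have hkey : ∀ M : Subgroup G, M.Normal → N < M → ((N ⊔ Y) ⊔ M).Normal := by
      intro M hM hNM
      have hMnotinT : ¬ M ≤ N ⊔ Y := by
        intro hMT
        by_cases hMY : M ≤ Y
        · exact hNY (le_trans hNM.le hMY)
        · have hMY1 : M ⊔ Y = N ⊔ Y :=
            le_antisymm (sup_le hMT le_sup_right)
              (sup_le (le_trans hNM.le le_sup_left) le_sup_right)
          have hMS : M ∈ {N : Subgroup G | N.Normal ∧ ∃ Y, ¬ N ≤ Y ∧ ¬ (N ⊔ Y).Normal} :=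
            ⟨hM, Y, hMY, by rw [hMY1]; exact hT⟩
          exact hNM.not_ge (hmax hMS hNM.le)
      by_cases hn2 : (M ⊔ (N ⊔ Y)).Normal
      · rwa [sup_comm M (N ⊔ Y)] at hn2
      · have hMS : M ∈ {N : Subgroup G | N.Normal ∧ ∃ Y, ¬ N ≤ Y ∧ ¬ (N ⊔ Y).Normal} :=
          ⟨hM, N ⊔ Y, hMnotinT, hn2⟩
        exact absurd (hmax hMS hNM.le) hNM.not_ge
    have hbc : IsBicyclicNilpotent ((1 - of ℚ G h) * of ℚ G a * tilde Y) :=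
      ⟨Y, h, a, hh, Or.inl rfl⟩
    have heq : ((1 - of ℚ G h) * of ℚ G a * tilde Y) * epsilonIdem N
        = ((Nat.card (Y ⊓ N : Subgroup G) : ℚ) / (Nat.card N : ℚ)) •
          ((1 - of ℚ G h) * (of ℚ G a * tilde (N ⊔ Y))) := by
      rw [epsilonIdem, if_neg hNtop, ← mul_assoc, n_mul_hat_eq hN h a, smul_mul_assoc]
      congr 1
      apply mul_list_prod_eq_self
      intro p hp
      obtain ⟨M, hMl, rfl⟩ := List.mem_map.mp hp
      have hM := (Set.Finite.mem_toFinset _).mp (Finset.mem_toList.mp hMl)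
      exact w_mul_one_sub_hat hM.1 (hkey M hM.1 hM.2.1) (Subgroup.mem_sup_right hh) a
    obtain ⟨m, hm⟩ := hint _ hbc N hN a
    have hval : (((1 - of ℚ G h) * of ℚ G a * tilde Y) * epsilonIdem N).coeff a
        = (Nat.card (Y ⊓ N : Subgroup G) : ℚ) / (Nat.card N : ℚ) := by
      rw [heq, MonoidAlgebra.coeff_smul_apply, witness_w_apply hconj, smul_eq_mul, mul_one]
    obtain ⟨hc0, hc1⟩ := c_pos_lt_one hNY
    exact c_not_integer hc0 hc1 m (by rw [← hval, hm])
  exact ⟨⟨imp_eps, conv_eps⟩, ⟨imp_hat, conv_hat⟩⟩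
end
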